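/- arXiv:2005.11855 — 3 statements merged into one kernel-verified Lean document; each statement's English description precedes it below -/
import Mathlib

section
/- Let B be a finite connected graph with β(B) ≥ 2 and let G be a group acting on B by graph automorphisms. Then the number of G-pivot vertices of B is at most 3(β(B) - 1). -/
open SimpleGraph

/-- The automorphism group of a simple graph, as a subgroup of permutations. -/
def graphAut {V : Type*} (B : SimpleGraph V) : Subgroup (Equiv.Perm V) where
  carrier := {σ | ∀ a b : V, B.Adj (σ a) (σ b) ↔ B.Adj a b}
  one_mem' := by intro a b; rfl
  mul_mem' := by
    intro σ τ hσ hτ a b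
    simpa [Equiv.Perm.mul_apply] using (hσ (τ a) (τ b)).trans (hτ a b)
  inv_mem' := by
    intro σ hσ a b
    simpa using (hσ (σ⁻¹ a) (σ⁻¹ b)).symm

/-- `v` is a `G`-pivot vertex of the graph `B`: for every neighbour `w` of `v`, the orbit of `w`
under the stabilizer of `v` in `G` has even cardinality. -/
def IsPivot {V : Type*} (B : SimpleGraph V) (G : Type*) [Group G] [MulAction G V] (v : V) : Prop :=
  ∀ w : V, B.Adj v w → Even ((MulAction.orbit (MulAction.stabilizer G v) w).ncard)

namespace PivotAux
open Finset MulAction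

universe u w
variable {V : Type u} {G : Type w} [Group G] [MulAction G V]

/-! ### Generic counting lemmas -/

lemma even_card_involution {α : Type*} [DecidableEq α] (S : Finset α) (f : α → α)
    (hmem : ∀ a ∈ S, f a ∈ S) (hinv : ∀ a ∈ S, f (f a) = a) (hne : ∀ a ∈ S, f a ≠ a) :
    Even S.card := by
  induction S using Finset.strongInduction with
  | _ S ih =>
    rcases S.eq_empty_or_nonempty with rfl | ⟨a, ha⟩
    · simp
    · have hfa : f a ∈ S := hmem a ha
      set S' : Finset α := (S.erase a).erase (f a) with hS'
      have hfa' : f a ∈ S.erase a := Finset.mem_erase.2 ⟨hne a ha, hfa⟩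
      have hsub : S' ⊂ S := by
        refine Finset.ssubset_of_subset_of_ssubset ?_ (Finset.erase_ssubset ha)
        exact Finset.erase_subset _ _
      have hcard : S'.card + 2 = S.card := by
        have h1 : (S.erase a).card = S.card - 1 := Finset.card_erase_of_mem ha
        have h2 : S'.card = (S.erase a).card - 1 := Finset.card_erase_of_mem hfa'
        have : 1 ≤ S.card := Finset.card_pos.2 ⟨a, ha⟩
        have : 1 ≤ (S.erase a).card := Finset.card_pos.2 ⟨f a, hfa'⟩
        omega
      have hmemS' : ∀ x ∈ S', x ∈ S := fun x hx =>
        Finset.mem_of_mem_erase (Finset.mem_of_mem_erase hx)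
      have key : Even S'.card := by
        refine ih S' hsub (fun x hx => ?_) (fun x hx => hinv x (hmemS' x hx))
          (fun x hx => hne x (hmemS' x hx))
        have hxS := hmemS' x hx
        have hx1 : x ≠ f a := (Finset.mem_erase.1 hx).1
        have hx2 : x ≠ a := (Finset.mem_erase.1 (Finset.mem_of_mem_erase hx)).1
        refine Finset.mem_erase.2 ⟨?_, Finset.mem_erase.2 ⟨?_, hmem x hxS⟩⟩
        · intro h; exact hx2 (by rw [← hinv x hxS, h, hinv a ha])
        · intro h; exact hx1 (by rw [← hinv x hxS, h])
      rw [← hcard]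
      exact key.add ⟨1, rfl⟩

lemma even_card_orbits {α : Type*} [Fintype α] [DecidableEq α] {H : Type*} [Group H]
    [MulAction H α] (S : Finset α) (hinv : ∀ (h : H), ∀ x ∈ S, h • x ∈ S)
    (horb : ∀ x ∈ S, Even (MulAction.orbit H x).ncard) : Even S.card := by
  induction S using Finset.strongInduction with
  | _ S ih =>
    rcases S.eq_empty_or_nonempty with rfl | ⟨a, ha⟩
    · simp
    · have hfin : (MulAction.orbit H a).Finite := Set.toFinite _
      set O : Finset α := hfin.toFinset with hO
      have hOmem : ∀ x, x ∈ O ↔ x ∈ MulAction.orbit H a := fun x => hfin.mem_toFinset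
      have hOsub : O ⊆ S := by
        intro x hx
        obtain ⟨h, rfl⟩ := (hOmem x).1 hx
        exact hinv h a ha
      have haO : a ∈ O := (hOmem a).2 (MulAction.mem_orbit_self a)
      have hcard : (S \ O).card + O.card = S.card := Finset.card_sdiff_add_card_eq_card hOsub
      have hOcard : Even O.card := by
        have := horb a ha
        rwa [Set.ncard_eq_toFinset_card _ hfin] at this
      have hssub : S \ O ⊂ S := by
        refine Finset.sdiff_ssubset hOsub ⟨a, haO⟩
      have hS' : Even (S \ O).card := by
        refine ih _ hssub (fun h x hx => ?_) (fun x hx => horb x (Finset.mem_sdiff.1 hx).1)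
        rcases Finset.mem_sdiff.1 hx with ⟨hxS, hxO⟩
        refine Finset.mem_sdiff.2 ⟨hinv h x hxS, fun hc => hxO ?_⟩
        obtain ⟨h', hh'⟩ := (hOmem _).1 hc
        refine (hOmem x).2 ⟨h⁻¹ * h', ?_⟩
        simp [mul_smul, hh']
      rw [← hcard]
      exact hS'.add hOcard

/-! ### Connectivity tools -/

variable {B : SimpleGraph V}

lemma walk_closed {s : Set V} (hcl : ∀ x ∈ s, ∀ y, B.Adj x y → y ∈ s) :
    ∀ {a b : V}, B.Walk a b → a ∈ s → b ∈ s := by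
  intro a b w
  induction w with
  | nil => exact id
  | cons h p ih => intro ha; exact ih (hcl _ ha _ h)

lemma not_all_le_two [Fintype V] [DecidableRel B.Adj]
    (hβ : 2 ≤ (B.edgeFinset.card : ℤ) - (Fintype.card V : ℤ) + 1)
    (hall : ∀ v, B.degree v ≤ 2) : False := by
  have h1 : ∑ v, B.degree v = 2 * B.edgeFinset.card := B.sum_degrees_eq_twice_card_edges
  have h2 : ∑ v, B.degree v ≤ ∑ _v : V, 2 := Finset.sum_le_sum fun v _ => hall v
  simp only [Finset.sum_const, Finset.card_univ, smul_eq_mul, mul_comm] at h2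
  have : (2 * B.edgeFinset.card : ℤ) ≤ 2 * Fintype.card V := by
    have h3 : 2 * B.edgeFinset.card ≤ 2 * Fintype.card V := by omega
    exact_mod_cast h3
  linarith

lemma no_closed_small [Fintype V] [DecidableRel B.Adj] (hconn : B.Connected)
    (hβ : 2 ≤ (B.edgeFinset.card : ℤ) - (Fintype.card V : ℤ) + 1)
    {s : Set V} {x0 : V} (hx0 : x0 ∈ s) (hcl : ∀ x ∈ s, ∀ y, B.Adj x y → y ∈ s)
    (hdeg : ∀ x ∈ s, B.degree x ≤ 2) : False := by
  have hall : ∀ y, y ∈ s := by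
    intro y
    obtain ⟨w⟩ := hconn.preconnected x0 y
    exact walk_closed hcl w hx0
  exact not_all_le_two hβ fun v => hdeg v (hall v)


variable {V : Type u} {G : Type w} [Group G] [MulAction G V] {B : SimpleGraph V}

/-! ### Action basics -/

section Action

variable (hact : ∀ (g : G) (a b : V), B.Adj a b → B.Adj (g • a) (g • b))
include hact

lemma adj_smul_iff (g : G) (a b : V) : B.Adj (g • a) (g • b) ↔ B.Adj a b := by
  constructor
  · intro h
    have := hact g⁻¹ _ _ h
    simpa using this
  · exact hact g a b

variable [Fintype V] [DecidableEq V] [DecidableRel B.Adj]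

lemma neighborFinset_smul (g : G) (a : V) :
    B.neighborFinset (g • a) = (B.neighborFinset a).image (g • ·) := by
  ext x
  simp only [mem_neighborFinset, Finset.mem_image]
  constructor
  · intro h
    refine ⟨g⁻¹ • x, ?_, by simp⟩
    have := hact g⁻¹ _ _ h
    simpa using this
  · rintro ⟨y, hy, rfl⟩
    exact hact g _ _ hy

lemma degree_smul (g : G) (a : V) : B.degree (g • a) = B.degree a := by
  rw [← card_neighborFinset_eq_degree, ← card_neighborFinset_eq_degree,
    neighborFinset_smul hact g a]
  exact Finset.card_image_of_injective _ (MulAction.injective g)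

lemma isPivot_smul {v : V} (g : G) (hv : IsPivot B G v) : IsPivot B G (g • v) := by
  intro x hx
  have hx' : B.Adj v (g⁻¹ • x) := by
    rw [← adj_smul_iff hact g]
    simpa using hx
  have hkey : MulAction.orbit (stabilizer G (g • v)) x
      = (g • ·) '' MulAction.orbit (stabilizer G v) (g⁻¹ • x) := by
    ext z
    constructor
    · rintro ⟨⟨h, hh⟩, rfl⟩
      have hh' : h • (g • v) = g • v := hh
      refine ⟨(g⁻¹ * h * g) • (g⁻¹ • x), ⟨⟨g⁻¹ * h * g, ?_⟩, rfl⟩, ?_⟩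
      · rw [mem_stabilizer_iff]
        have : (g⁻¹ * h * g) • v = g⁻¹ • (h • (g • v)) := by
          simp [mul_smul]
        rw [this, hh']
        simp
      · simp [mul_smul]
    · rintro ⟨-, ⟨⟨h, hh⟩, rfl⟩, rfl⟩
      have hh' : h • v = v := hh
      refine ⟨⟨g * h * g⁻¹, ?_⟩, ?_⟩
      · rw [mem_stabilizer_iff]
        have : (g * h * g⁻¹) • (g • v) = g • (h • v) := by
          simp [mul_smul]
        rw [this, hh']
      · show (g * h * g⁻¹) • x = _
        simp [mul_smul]
  rw [hkey, Set.ncard_image_of_injective _ (MulAction.injective g)]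
  exact hv _ hx'

end Action

section Graph

variable [Fintype V] [DecidableEq V] [DecidableRel B.Adj]

lemma neighborFinset_pair {x y : V} (hd : B.degree x = 2) (hy : B.Adj x y) {z : V}
    (hz : B.Adj x z) (hyz : y ≠ z) : B.neighborFinset x = {y, z} := by
  have hsub : ({y, z} : Finset V) ⊆ B.neighborFinset x := by
    intro a ha
    rcases Finset.mem_insert.1 ha with rfl | ha
    · exact (mem_neighborFinset _ _ _).2 hy
    · rw [Finset.mem_singleton] at ha
      subst ha
      exact (mem_neighborFinset _ _ _).2 hz
  refine (Finset.eq_of_subset_of_card_le hsub ?_).symm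
  rw [card_neighborFinset_eq_degree, hd, Finset.card_insert_of_notMem (by simpa using hyz),
    Finset.card_singleton]

variable (hact : ∀ (g : G) (a b : V), B.Adj a b → B.Adj (g • a) (g • b))
include hact

lemma pivot_even_degree {v : V} (hv : IsPivot B G v) : Even (B.degree v) := by
  rw [← card_neighborFinset_eq_degree]
  refine even_card_orbits (H := ↥(stabilizer G v)) (B.neighborFinset v) ?_ ?_
  · rintro ⟨g, hg⟩ x hx
    rw [mem_neighborFinset] at hx ⊢
    have hg' : g • v = v := hg
    have := hact g _ _ hx
    rwa [hg'] at this
  · intro x hx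
    exact hv x ((mem_neighborFinset _ _ _).1 hx)

lemma pivot_swap {v : V} (hv : IsPivot B G v) (hd : B.degree v = 2) {y z : V} (hy : B.Adj v y)
    (hz : B.Adj v z) (hyz : y ≠ z) : ∃ g : G, g • v = v ∧ g • y = z := by
  have horb := hv y hy
  set O : Set V := MulAction.orbit (stabilizer G v) y with hO
  have hsub : O ⊆ {y, z} := by
    rintro x ⟨⟨g, hg⟩, rfl⟩
    have hg' : g • v = v := hg
    have hadj : B.Adj v (g • y) := by
      have := hact g _ _ hy
      rwa [hg'] at this
    have hmem : g • y ∈ B.neighborFinset v := (mem_neighborFinset _ _ _).2 hadj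
    rw [neighborFinset_pair hd hy hz hyz] at hmem
    simpa using hmem
  have hyO : y ∈ O := MulAction.mem_orbit_self y
  have hfin : O.Finite := Set.toFinite _
  have hcard2 : O.ncard ≤ 2 := by
    have h1 := Set.ncard_le_ncard hsub (Set.toFinite _)
    have h2 : ({y, z} : Set V).ncard = 2 := Set.ncard_pair hyz
    omega
  have hpos : 0 < O.ncard := (Set.ncard_pos hfin).2 ⟨y, hyO⟩
  have h2 : O.ncard = 2 := by
    obtain ⟨r, hr⟩ := horb
    omega
  have hOeq : O = {y, z} := by
    refine Set.eq_of_subset_of_ncard_le hsub ?_ (Set.toFinite _)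
    rw [Set.ncard_pair hyz, h2]
  have hzO : z ∈ O := by rw [hOeq]; exact Set.mem_insert_iff.2 (Or.inr rfl)
  obtain ⟨⟨g, hg⟩, hgz⟩ := hzO
  exact ⟨g, hg, hgz⟩

end Graph


/-! ### Chains through degree-two vertices -/

section Chain

variable (B) [Fintype V] [DecidableEq V] [DecidableRel B.Adj]

/-- The neighbour of `x` other than `y` (for `x` of degree 2). -/
noncomputable def other (x y : V) : V :=
  if h : ((B.neighborFinset x).erase y).Nonempty then h.choose else x

variable {B}

lemma other_mem {x y : V} (hd : B.degree x = 2) (hxy : B.Adj x y) :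
    other B x y ∈ (B.neighborFinset x).erase y := by
  have hmem : y ∈ B.neighborFinset x := (mem_neighborFinset _ _ _).2 hxy
  have hcard : ((B.neighborFinset x).erase y).card = 1 := by
    rw [Finset.card_erase_of_mem hmem, card_neighborFinset_eq_degree, hd]
  have hne : ((B.neighborFinset x).erase y).Nonempty := by
    rw [← Finset.card_pos, hcard]; norm_num
  rw [other, dif_pos hne]
  exact hne.choose_spec

lemma other_adj {x y : V} (hd : B.degree x = 2) (hxy : B.Adj x y) : B.Adj x (other B x y) :=
  (mem_neighborFinset _ _ _).1 (Finset.mem_of_mem_erase (other_mem hd hxy))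

lemma other_ne {x y : V} (hd : B.degree x = 2) (hxy : B.Adj x y) : other B x y ≠ y :=
  (Finset.mem_erase.1 (other_mem hd hxy)).1

lemma other_eq {x y : V} (hd : B.degree x = 2) (hxy : B.Adj x y) {z : V} (hz : B.Adj x z)
    (hzy : z ≠ y) : other B x y = z := by
  have hmem : y ∈ B.neighborFinset x := (mem_neighborFinset _ _ _).2 hxy
  have hcard : ((B.neighborFinset x).erase y).card ≤ 1 := by
    rw [Finset.card_erase_of_mem hmem, card_neighborFinset_eq_degree, hd]
  exact Finset.card_le_one.1 hcard _ (other_mem hd hxy) _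
    (Finset.mem_erase.2 ⟨hzy, (mem_neighborFinset _ _ _).2 hz⟩)

lemma other_smul (hact : ∀ (g : G) (a b : V), B.Adj a b → B.Adj (g • a) (g • b)) (g : G)
    {x y : V} (hd : B.degree x = 2) (hxy : B.Adj x y) :
    g • other B x y = other B (g • x) (g • y) := by
  refine (other_eq ?_ (hact g _ _ hxy) (hact g _ _ (other_adj hd hxy)) ?_).symm
  · rw [degree_smul hact g x, hd]
  · intro h
    exact other_ne hd hxy (MulAction.injective g h)

variable (B)

/-- The sequence obtained by walking through the graph starting with the step `a → b`,
always continuing through the "other" neighbour. -/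
noncomputable def chain (a b : V) : ℕ → V
  | 0 => a
  | 1 => b
  | (n+2) => other B (chain a b (n+1)) (chain a b n)

@[simp] lemma chain_zero (a b : V) : chain B a b 0 = a := rfl
@[simp] lemma chain_one (a b : V) : chain B a b 1 = b := rfl
lemma chain_add_two (a b : V) (n : ℕ) :
    chain B a b (n+2) = other B (chain B a b (n+1)) (chain B a b n) := rfl

/-- The first `m` steps of the chain are genuine steps through degree-two vertices. -/
def OkC (a b : V) (m : ℕ) : Prop :=
  (∀ j, j ≤ m → B.degree (chain B a b j) = 2) ∧
  (∀ j, j < m → B.Adj (chain B a b j) (chain B a b (j+1)))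

variable {B}

lemma OkC.mono {a b : V} {m k : ℕ} (h : OkC B a b m) (hk : k ≤ m) : OkC B a b k :=
  ⟨fun j hj => h.1 j (le_trans hj hk), fun j hj => h.2 j (lt_of_lt_of_le hj hk)⟩

lemma OkC.adj_succ {a b : V} {m : ℕ} (h : OkC B a b m) (hm : 1 ≤ m) {j : ℕ} (hj : j ≤ m) :
    B.Adj (chain B a b j) (chain B a b (j+1)) := by
  rcases lt_or_eq_of_le hj with hj' | rfl
  · exact h.2 j hj'
  · obtain ⟨i, rfl⟩ : ∃ i, j = i + 1 := ⟨j - 1, by omega⟩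
    rw [chain_add_two]
    exact other_adj (h.1 _ le_rfl) ((h.2 i (by omega)).symm)

lemma chain_smul (hact : ∀ (g : G) (a b : V), B.Adj a b → B.Adj (g • a) (g • b)) (g : G)
    {a b : V} {m : ℕ} (hok : OkC B a b m) :
    ∀ j, j ≤ m + 1 → g • chain B a b j = chain B (g • a) (g • b) j := by
  intro j
  induction j using Nat.strong_induction_on with
  | _ j ih =>
    match j with
    | 0 => intro _; rfl
    | 1 => intro _; rfl
    | (i+2) =>
      intro hj
      rw [chain_add_two, chain_add_two,
        other_smul hact g (hok.1 (i+1) (by omega)) ((hok.2 i (by omega)).symm),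
        ih (i+1) (by omega) (by omega), ih i (by omega) (by omega)]

lemma chain_shift {a b : V} (t : ℕ) :
    ∀ j, chain B (chain B a b t) (chain B a b (t+1)) j = chain B a b (t + j) := by
  intro j
  induction j using Nat.strong_induction_on with
  | _ j ih =>
    match j with
    | 0 => simp
    | 1 => rfl
    | (i+2) =>
      rw [chain_add_two, ih (i+1) (by omega), ih i (by omega)]
      have h2 : t + (i+2) = (t + i) + 2 := by omega
      have h3 : t + (i+1) = (t + i) + 1 := by omega
      rw [h2, h3, chain_add_two]

lemma chain_rev {a b : V} {m : ℕ} (hok : OkC B a b m) {t : ℕ} (ht : t + 1 ≤ m) :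
    ∀ j d, j + d = t + 1 →
      chain B (chain B a b (t+1)) (chain B a b t) j = chain B a b d := by
  intro j
  induction j using Nat.strong_induction_on with
  | _ j ih =>
    match j with
    | 0 => intro d hd; simp only [chain_zero]; congr 1; omega
    | 1 => intro d hd; simp only [chain_one]; congr 1; omega
    | (i+2) =>
      intro d hd
      rw [chain_add_two, ih (i+1) (by omega) (d+1) (by omega), ih i (by omega) (d+2) (by omega)]
      refine other_eq (hok.1 (d+1) (by omega)) (hok.2 (d+1) (by omega))
        ((hok.2 d (by omega)).symm) ?_
      have : chain B a b (d+2) ≠ chain B a b d := by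
        rw [chain_add_two]
        exact other_ne (hok.1 (d+1) (by omega)) ((hok.2 d (by omega)).symm)
      exact this.symm

lemma chain_no_repeat (hconn : B.Connected)
    (hβ : 2 ≤ (B.edgeFinset.card : ℤ) - (Fintype.card V : ℤ) + 1)
    {a b : V} {m : ℕ} (hok : OkC B a b m) (hm : 1 ≤ m) :
    ∀ i j, i < j → j ≤ m + 1 → chain B a b i ≠ chain B a b j := by
  set c := chain B a b with hc
  intro i0 j0 hij0 hj0 heq0
  have hex : ∃ d, ∃ i j, i < j ∧ j ≤ m + 1 ∧ j - i = d ∧ c i = c j :=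
    ⟨j0 - i0, i0, j0, hij0, hj0, rfl, heq0⟩
  classical
  obtain ⟨i, j, hij, hjm, hd0, heq⟩ := Nat.find_spec hex
  set d0 := Nat.find hex with hd0'
  have hmin : ∀ d', d' < d0 → ¬ ∃ i j, i < j ∧ j ≤ m + 1 ∧ j - i = d' ∧ c i = c j :=
    fun d' hd' => Nat.find_min hex hd'
  have hne1 : d0 ≠ 1 := by
    intro h1
    have : j = i + 1 := by omega
    subst this
    exact (hok.adj_succ hm (by omega)).ne heq
  have hne2 : d0 ≠ 2 := by
    intro h2
    have : j = i + 2 := by omega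
    subst this
    have : c (i+2) ≠ c i := by
      rw [hc, chain_add_two]
      exact other_ne (hok.1 (i+1) (by omega)) ((hok.2 i (by omega)).symm)
    exact this heq.symm
  have hd3 : 3 ≤ d0 := by
    rcases lt_or_ge d0 3 with h | h
    · interval_cases d0 <;> omega
    · exact h
  -- the set of chain vertices between i and j is closed under adjacency
  set S : Set V := {x | ∃ t, i ≤ t ∧ t < j ∧ c t = x} with hS
  have hx0 : c i ∈ S := ⟨i, le_rfl, by omega, rfl⟩
  have hdegS : ∀ x ∈ S, B.degree x ≤ 2 := by
    rintro x ⟨t, hti, htj, rfl⟩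
    exact le_of_eq (hok.1 t (by omega))
  have hclosed : ∀ x ∈ S, ∀ y, B.Adj x y → y ∈ S := by
    rintro x ⟨t, hti, htj, rfl⟩ y hy
    -- the two neighbours of `c t`
    have hdt : B.degree (c t) = 2 := hok.1 t (by omega)
    have hnext : B.Adj (c t) (c (t+1)) := hok.adj_succ hm (by omega)
    by_cases hti' : t = i
    · subst hti'
      have hprev : B.Adj (c t) (c (j-1)) := by
        have h1 : B.Adj (c (j-1)) (c j) := by
          have : (j-1) + 1 = j := by omega
          rw [← this]
          exact hok.adj_succ hm (by omega)
        rw [heq]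
        exact h1.symm
      have hne : c (t+1) ≠ c (j-1) := by
        intro hcc
        rcases Nat.lt_trichotomy (t+1) (j-1) with h | h | h
        · exact hmin ((j-1) - (t+1)) (by omega) ⟨t+1, j-1, h, by omega, rfl, hcc⟩
        · omega
        · omega
      have hpair := neighborFinset_pair hdt hnext hprev hne
      have hyy : y ∈ B.neighborFinset (c t) := (mem_neighborFinset _ _ _).2 hy
      rw [hpair] at hyy
      rcases Finset.mem_insert.1 hyy with rfl | hyy
      · rcases lt_or_ge (t+1) j with h | h
        · exact ⟨t+1, by omega, h, rfl⟩
        · have : t + 1 = j := by omega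
          rw [this, ← heq]
          exact hx0
      · rw [Finset.mem_singleton] at hyy
        subst hyy
        exact ⟨j-1, by omega, by omega, rfl⟩
    · have hti2 : i < t := by omega
      have hprev : B.Adj (c t) (c (t-1)) := by
        have : (t-1) + 1 = t := by omega
        conv_lhs => rw [← this]
        exact (hok.adj_succ hm (by omega)).symm
      have hne : c (t+1) ≠ c (t-1) := by
        intro hcc
        exact hmin 2 (by omega) ⟨t-1, t+1, by omega, by omega, by omega, hcc.symm⟩
      have hpair := neighborFinset_pair hdt hnext hprev hne
      have hyy : y ∈ B.neighborFinset (c t) := (mem_neighborFinset _ _ _).2 hy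
      rw [hpair] at hyy
      rcases Finset.mem_insert.1 hyy with rfl | hyy
      · rcases lt_or_ge (t+1) j with h | h
        · exact ⟨t+1, by omega, h, rfl⟩
        · have : t + 1 = j := by omega
          rw [this, ← heq]
          exact hx0
      · rw [Finset.mem_singleton] at hyy
        subst hyy
        exact ⟨t-1, by omega, by omega, rfl⟩
  exact no_closed_small hconn hβ hx0 hclosed hdegS

end Chain


/-! ### No two distinct degree-2 pivots connected through degree-2 vertices -/

section NoTwo

variable (B) [Fintype V] [DecidableEq V] [DecidableRel B.Adj]

/-- Reachability through degree-two vertices. -/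
def ReachD2 (x y : V) : Prop :=
  Relation.ReflTransGen (fun a b => B.Adj a b ∧ B.degree a = 2 ∧ B.degree b = 2) x y

variable {B}

lemma reachD2_symm {x y : V} (h : ReachD2 B x y) : ReachD2 B y x := by
  induction h with
  | refl => exact Relation.ReflTransGen.refl
  | tail _ hstep ih => exact Relation.ReflTransGen.head ⟨hstep.1.symm, hstep.2.2, hstep.2.1⟩ ih

lemma reachD2_deg {x y : V} (hdx : B.degree x = 2) (h : ReachD2 B x y) : B.degree y = 2 := by
  induction h with
  | refl => exact hdx
  | tail _ hstep _ => exact hstep.2.2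

lemma reach_chain {v x : V} (hdv : B.degree v = 2) (hr : ReachD2 B v x) :
    x = v ∨ ∃ b k, 1 ≤ k ∧ OkC B v b k ∧ chain B v b k = x := by
  induction hr with
  | refl => exact Or.inl rfl
  | @tail b' x hprev hstep ih =>
    rcases ih with rfl | ⟨b, k, hk, hok, hck⟩
    · right
      refine ⟨x, 1, le_rfl, ⟨?_, ?_⟩, rfl⟩
      · intro j hj
        interval_cases j
        · exact hdv
        · exact hstep.2.2
      · intro j hj
        interval_cases j
        simpa using hstep.1
    · -- x is adjacent to c k; its neighbours are c (k-1) and c (k+1)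
      subst hck
      set c := chain B v b with hc
      obtain ⟨k', rfl⟩ : ∃ k', k = k' + 1 := ⟨k - 1, by omega⟩
      have hdk : B.degree (c (k'+1)) = 2 := hok.1 _ le_rfl
      have hprevadj : B.Adj (c (k'+1)) (c k') := (hok.2 k' (by omega)).symm
      have hnextadj : B.Adj (c (k'+1)) (c (k'+2)) := hok.adj_succ hk le_rfl
      have hne : c (k'+2) ≠ c k' := by
        rw [hc, chain_add_two]
        exact other_ne hdk hprevadj
      have hpair := neighborFinset_pair hdk hnextadj hprevadj hne
      have hx : x ∈ B.neighborFinset (c (k'+1)) := (mem_neighborFinset _ _ _).2 hstep.1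
      rw [hpair] at hx
      rcases Finset.mem_insert.1 hx with rfl | hx
      · right
        refine ⟨b, k'+2, by omega, ⟨?_, ?_⟩, rfl⟩
        · intro j hj
          rcases le_or_gt j (k'+1) with h | h
          · exact hok.1 j h
          · have : j = k' + 2 := by omega
            subst this
            exact hstep.2.2
        · intro j hj
          rcases lt_or_ge j (k'+1) with h | h
          · exact hok.2 j h
          · have : j = k' + 1 := by omega
            subst this
            exact hnextadj
      · rw [Finset.mem_singleton] at hx
        subst hx
        rcases Nat.eq_zero_or_pos k' with rfl | hk'
        · left; rfl
        · right
          exact ⟨b, k', by omega, hok.mono (by omega), rfl⟩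

theorem no_two (hact : ∀ (g : G) (a b : V), B.Adj a b → B.Adj (g • a) (g • b))
    (hconn : B.Connected) (hβ : 2 ≤ (B.edgeFinset.card : ℤ) - (Fintype.card V : ℤ) + 1)
    {u v : V} (hu : IsPivot B G u) (hv : IsPivot B G v)
    (hdv : B.degree v = 2) (hr : ReachD2 B v u) : u = v := by
  rcases reach_chain hdv hr with h | ⟨b, k, hk, hok0, hck⟩
  · exact h
  exfalso
  set c := chain B v b with hc
  have main : ∀ t, OkC B v b (t * k) ∧ IsPivot B G (c (t * k)) := by
    intro t
    induction t using Nat.strong_induction_on with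
    | _ t ih =>
      match t with
      | 0 =>
        refine ⟨⟨?_, ?_⟩, ?_⟩
        · intro j hj
          have : j = 0 := by omega
          subst this
          exact hdv
        · intro j hj
          omega
        · rw [zero_mul]; exact hv
      | 1 =>
        rw [one_mul]
        exact ⟨hok0, hck ▸ hu⟩
      | (s+2) =>
        have ih1 := ih (s+1) (by omega)
        have ih0 := ih s (by omega)
        set T := (s+1) * k with hT
        have hT1 : 1 ≤ T := by
          have := Nat.mul_le_mul (show 1 ≤ s+1 by omega) hk
          omega
        obtain ⟨T', hT'⟩ : ∃ T', T = T' + 1 := ⟨T - 1, by omega⟩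
        have hokT : OkC B v b T := ih1.1
        have hpT : IsPivot B G (c T) := ih1.2
        have hdT : B.degree (c T) = 2 := hokT.1 T le_rfl
        have hprev : B.Adj (c T) (c T') := by
          conv_lhs => rw [hT']
          exact (hokT.2 T' (by omega)).symm
        have hnextadj : B.Adj (c T) (c (T+1)) := hokT.adj_succ hT1 le_rfl
        have hne : c T' ≠ c (T+1) := by
          have : c (T + 1) ≠ c T' := by
            rw [hT']
            show c (T' + 2) ≠ c T'
            rw [hc, chain_add_two]
            refine other_ne ?_ ?_
            · rw [← hT']; exact hdT
            · rw [← hT']; exact hprev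
          exact this.symm
        obtain ⟨g, hgT, hgswap⟩ := pivot_swap hact hpT hdT hprev hnextadj hne
        have hrev : ∀ j d, j + d = T → chain B (c T) (c T') j = c d := by
          intro j d hjd
          have := chain_rev hokT (t := T') (by omega) j d (by omega)
          rw [← hT'] at this
          exact this
        have hokrev : OkC B (c T) (c T') T := by
          constructor
          · intro j hj
            rw [hrev j (T - j) (by omega)]
            exact hokT.1 (T - j) (by omega)
          · intro j hj
            rw [hrev j (T - j) (by omega), hrev (j+1) (T - j - 1) (by omega)]
            have h := hokT.2 (T - j - 1) (by omega)
            rw [show T - j - 1 + 1 = T - j from by omega] at h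
            exact h.symm
        have hkey : ∀ j d, j + d = T → g • c d = c (T + j) := by
          intro j d hjd
          have h1 : g • chain B (c T) (c T') j = chain B (g • c T) (g • c T') j :=
            chain_smul hact g hokrev j (by omega)
          rw [hrev j d hjd] at h1
          rw [h1, hgT, hgswap]
          exact chain_shift T j
        have hklT : k ≤ T := by
          have := Nat.mul_le_mul (show 1 ≤ s+1 by omega) (le_refl k)
          omega
        have hbound : (s+2) * k = T + k := by rw [hT]; ring
        have hok2 : OkC B v b ((s+2) * k) := by
          constructor
          · intro i hi
            rcases le_or_gt i T with h | h
            · exact hokT.1 i h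
            · have he : i = T + (i - T) := by omega
              have hdeg : B.degree (c i) = 2 := by
                rw [he, ← hkey (i - T) (T - (i - T)) (by omega), degree_smul hact]
                exact hokT.1 _ (by omega)
              exact hdeg
          · intro i hi
            rcases lt_or_ge i T with h | h
            · exact hokT.2 i h
            · set j := i - T with hj
              have hjT : j + 1 ≤ T := by omega
              have h1 : g • c (T - j) = c (T + j) := hkey j (T - j) (by omega)
              have h2 : g • c (T - (j+1)) = c (T + (j+1)) := hkey (j+1) (T - (j+1)) (by omega)
              have h3 := hact g _ _ ((hokT.2 (T - (j+1)) (by omega)).symm)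
              rw [show T - (j+1) + 1 = T - j by omega] at h3
              rw [h1, h2] at h3
              rw [show i = T + j by omega, show T + j + 1 = T + (j + 1) by omega]
              exact h3
        refine ⟨hok2, ?_⟩
        have hpiv : c (T + k) = g • c (s * k) := by
          rw [hkey k (s * k) (by rw [hT]; ring)]
        rw [hbound, hpiv]
        exact isPivot_smul hact g ih0.2
  have hcard1 : 1 ≤ Fintype.card V := Fintype.card_pos_iff.2 hconn.nonempty
  have hbig := (main (Fintype.card V)).1
  have hm1 : 1 ≤ Fintype.card V * k := by
    have := Nat.mul_le_mul hcard1 hk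
    omega
  have hinj : Set.InjOn (fun t => c (t * k)) ↑(Finset.range (Fintype.card V + 1)) := by
    intro t1 h1 t2 h2 heq
    simp only [Finset.coe_range, Set.mem_Iio] at h1 h2
    by_contra hne
    rcases lt_or_ge t1 t2 with h | h
    · exact chain_no_repeat hconn hβ hbig hm1 (t1 * k) (t2 * k)
        (by exact (Nat.mul_lt_mul_right (by omega : 0 < k)).2 h)
        (by have := Nat.mul_le_mul (show t2 ≤ Fintype.card V by omega) (le_refl k); omega) heq
    · have h' : t2 < t1 := by omega
      exact chain_no_repeat hconn hβ hbig hm1 (t2 * k) (t1 * k)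
        (by exact (Nat.mul_lt_mul_right (by omega : 0 < k)).2 h')
        (by have := Nat.mul_le_mul (show t1 ≤ Fintype.card V by omega) (le_refl k); omega) heq.symm
  have hle := Finset.card_le_card_of_injOn (fun t => c (t * k))
    (fun t _ => Finset.mem_univ _) hinj
  rw [Finset.card_range, Finset.card_univ] at hle
  omega

end NoTwo


/-! ### Counting pairs -/

section Count

variable [Fintype V] [DecidableEq V] [DecidableRel B.Adj]

lemma pairs_card (s : Finset V) :
    (univ.filter fun p : V × V => B.Adj p.1 p.2 ∧ p.1 ∈ s).card = ∑ x ∈ s, B.degree x := by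
  rw [Finset.card_eq_sum_card_fiberwise (f := Prod.fst) (t := s)
    (fun p hp => (Finset.mem_filter.1 hp).2.2)]
  refine Finset.sum_congr rfl fun x hx => ?_
  rw [← card_neighborFinset_eq_degree]
  refine Finset.card_bij (fun p _ => p.2) ?_ ?_ ?_
  · rintro ⟨a, y⟩ hp
    simp only [Finset.mem_filter, Finset.mem_univ, true_and] at hp
    obtain ⟨⟨hadj, -⟩, rfl⟩ := hp
    exact (mem_neighborFinset _ _ _).2 hadj
  · rintro ⟨a1, y1⟩ h1 ⟨a2, y2⟩ h2 heq
    simp only [Finset.mem_filter, Finset.mem_univ, true_and] at h1 h2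
    cases heq
    rw [Prod.mk.injEq]
    exact ⟨h1.2.trans h2.2.symm, rfl⟩
  · intro y hy
    exact ⟨(x, y), Finset.mem_filter.2 ⟨Finset.mem_filter.2
      ⟨Finset.mem_univ _, ⟨(mem_neighborFinset _ _ _).1 hy, hx⟩⟩, rfl⟩, rfl⟩

open Classical in
theorem count_minDeg2 (hact : ∀ (g : G) (a b : V), B.Adj a b → B.Adj (g • a) (g • b))
    (hconn : B.Connected)
    (hβ : 2 ≤ (B.edgeFinset.card : ℤ) - (Fintype.card V : ℤ) + 1)
    (hmin : ∀ x : V, 2 ≤ B.degree x) :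
    (({v : V | IsPivot B G v}.ncard : ℤ))
      ≤ 3 * (((B.edgeFinset.card : ℤ) - (Fintype.card V : ℤ) + 1) - 1) := by
  classical
  rw [Set.ncard_eq_toFinset_card', Set.toFinset_setOf]
  set n := Fintype.card V with hn
  set E := B.edgeFinset.card with hE
  set Piv : Finset V := univ.filter (fun v => IsPivot B G v) with hPiv
  set D2 : Finset V := univ.filter (fun v => B.degree v = 2) with hD2
  set A3 : Finset V := univ.filter (fun v => ¬ B.degree v = 2) with hA3
  set P2 : Finset V := Piv.filter (fun v => B.degree v = 2) with hP2
  set P4 : Finset V := Piv.filter (fun v => ¬ B.degree v = 2) with hP4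
  have hsplitPiv : P2.card + P4.card = Piv.card :=
    Finset.card_filter_add_card_filter_not _
  have hD2A3 : D2.card + A3.card = n := by
    rw [hn, ← Finset.card_univ]
    exact Finset.card_filter_add_card_filter_not _
  have hsumdeg : ∑ v, B.degree v = 2 * E := B.sum_degrees_eq_twice_card_edges
  have hdegsplit : (∑ x ∈ D2, B.degree x) + (∑ x ∈ A3, B.degree x) = 2 * E := by
    rw [← hsumdeg]
    exact Finset.sum_filter_add_sum_filter_not _ _ _
  have hsumD2 : ∑ x ∈ D2, B.degree x = 2 * D2.card := by
    rw [Finset.sum_congr rfl (fun x hx => (Finset.mem_filter.1 hx).2), Finset.sum_const,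
      smul_eq_mul, mul_comm]
  have hsumA3 : ∑ x ∈ A3, B.degree x = 2 * E - 2 * D2.card := by omega
  -- KEY 2 : A3.card + P4.card ≤ 2*(E - n)
  have key2 : (A3.card : ℤ) + (P4.card : ℤ) ≤ 2 * ((E : ℤ) - n) := by
    have hperel : ∀ x ∈ A3, (1 : ℤ) + (if x ∈ Piv then 1 else 0) ≤ (B.degree x : ℤ) - 2 := by
      intro x hx
      have hx3 : 3 ≤ B.degree x := by
        have h2 := hmin x
        have hne := (Finset.mem_filter.1 hx).2
        omega
      by_cases hxp : x ∈ Piv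
      · have hpiv : IsPivot B G x := (Finset.mem_filter.1 hxp).2
        have heven : Even (B.degree x) := pivot_even_degree hact hpiv
        obtain ⟨r, hr⟩ := heven
        simp only [hxp, if_true]
        have : 4 ≤ B.degree x := by omega
        push_cast
        omega
      · simp only [hxp, if_false]
        push_cast
        omega
    have hsum := Finset.sum_le_sum hperel
    have hleft : ∑ x ∈ A3, ((1 : ℤ) + (if x ∈ Piv then 1 else 0))
        = (A3.card : ℤ) + (P4.card : ℤ) := by
      rw [Finset.sum_add_distrib, Finset.sum_const, Finset.sum_ite_mem]
      have hinter : A3 ∩ Piv = P4 := by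
        ext x
        simp only [hA3, hP4, Finset.mem_inter, Finset.mem_filter, Finset.mem_univ, true_and]
        tauto
      rw [hinter]
      simp [mul_comm]
    have hright : ∑ x ∈ A3, ((B.degree x : ℤ) - 2) = 2 * ((E : ℤ) - n) := by
      rw [Finset.sum_sub_distrib, Finset.sum_const, nsmul_eq_mul]
      have h1 : ∑ x ∈ A3, (B.degree x : ℤ) = ((∑ x ∈ A3, B.degree x : ℕ) : ℤ) := by
        push_cast
        rfl
      rw [h1, hsumA3]
      have h2 : 2 * D2.card ≤ 2 * E := by omega
      have h3 : D2.card + A3.card = n := hD2A3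
      push_cast [Nat.cast_sub h2]
      push_cast at h3
      linarith
    rw [hleft, hright] at hsum
    exact hsum
  -- KEY 1 : 2 * P2.card ≤ Σ_{A3} deg
  set Out : V → Finset (V × V) := fun v =>
    univ.filter (fun p : V × V => B.Adj p.1 p.2 ∧ ReachD2 B v p.1 ∧ ¬ B.degree p.2 = 2)
    with hOut
  have hout2 : ∀ v ∈ P2, 2 ≤ (Out v).card := by
    intro v hvP2
    have hdv : B.degree v = 2 := (Finset.mem_filter.1 hvP2).2
    have hKdeg : ∀ x, ReachD2 B v x → B.degree x = 2 := fun x hx => reachD2_deg hdv hx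
    set Kfin : Finset V := univ.filter (fun x => ReachD2 B v x) with hKfin
    set AllK : Finset (V × V) :=
      univ.filter (fun p : V × V => B.Adj p.1 p.2 ∧ p.1 ∈ Kfin) with hAllK
    set InK : Finset (V × V) :=
      univ.filter (fun p : V × V => B.Adj p.1 p.2 ∧ ReachD2 B v p.1 ∧ ReachD2 B v p.2)
      with hInK
    have hsplit : InK.card + (Out v).card = AllK.card := by
      have e1 : AllK.filter (fun p => B.degree p.2 = 2) = InK := by
        ext p
        simp only [hAllK, hInK, hKfin, Finset.mem_filter, Finset.mem_univ, true_and]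
        constructor
        · rintro ⟨⟨hadj, hK⟩, hdeg⟩
          exact ⟨hadj, hK, Relation.ReflTransGen.tail hK ⟨hadj, hKdeg _ hK, hdeg⟩⟩
        · rintro ⟨hadj, hK1, hK2⟩
          exact ⟨⟨hadj, hK1⟩, hKdeg _ hK2⟩
      have e2 : AllK.filter (fun p => ¬ B.degree p.2 = 2) = Out v := by
        ext p
        simp only [hAllK, hOut, hKfin, Finset.mem_filter, Finset.mem_univ, true_and]
        tauto
      rw [← e1, ← e2]
      exact Finset.card_filter_add_card_filter_not _
    have hAllcard : AllK.card = 2 * Kfin.card := by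
      rw [hAllK, pairs_card]
      rw [Finset.sum_congr rfl (fun x hx => hKdeg x (Finset.mem_filter.1 hx).2), Finset.sum_const,
        smul_eq_mul, mul_comm]
    have hInEven : Even InK.card := by
      refine even_card_involution InK Prod.swap ?_ ?_ ?_
      · rintro ⟨a, b⟩ hp
        simp only [hInK, Finset.mem_filter, Finset.mem_univ, true_and] at hp ⊢
        exact ⟨hp.1.symm, hp.2.2, hp.2.1⟩
      · rintro ⟨a, b⟩ _
        rfl
      · rintro ⟨a, b⟩ hp hc
        simp only [hInK, Finset.mem_filter, Finset.mem_univ, true_and] at hp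
        have : a = b := congrArg Prod.snd hc
        exact hp.1.ne this
    have houtne : (Out v).card ≠ 0 := by
      intro h0
      have hout0 : Out v = ∅ := Finset.card_eq_zero.1 h0
      refine no_closed_small hconn hβ (s := {x | ReachD2 B v x})
        (x0 := v) Relation.ReflTransGen.refl ?_ ?_
      · intro x hx y hadj
        by_cases hdy : B.degree y = 2
        · exact Relation.ReflTransGen.tail hx ⟨hadj, hKdeg _ hx, hdy⟩
        · exfalso
          have : (x, y) ∈ Out v := by
            simp only [hOut, Finset.mem_filter, Finset.mem_univ, true_and]
            exact ⟨hadj, hx, hdy⟩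
          rw [hout0] at this
          exact absurd this (Finset.notMem_empty _)
      · intro x hx
        exact le_of_eq (hKdeg x hx)
    have hOutEven : Even (Out v).card := by
      obtain ⟨r1, hr1⟩ := hInEven
      exact ⟨Kfin.card - r1, by omega⟩
    obtain ⟨r, hr⟩ := hOutEven
    omega
  have hdisj : ∀ u ∈ P2, ∀ v ∈ P2, u ≠ v → Disjoint (Out u) (Out v) := by
    intro u hu v hv huv
    rw [Finset.disjoint_left]
    intro p hpu hpv
    simp only [hOut, Finset.mem_filter, Finset.mem_univ, true_and] at hpu hpv
    have hru : ReachD2 B u p.1 := hpu.2.1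
    have hrv : ReachD2 B v p.1 := hpv.2.1
    have hvu : ReachD2 B v u := hrv.trans (reachD2_symm hru)
    have hPu : IsPivot B G u := (Finset.mem_filter.1 (Finset.mem_filter.1 hu).1).2
    have hPv : IsPivot B G v := (Finset.mem_filter.1 (Finset.mem_filter.1 hv).1).2
    have hdv : B.degree v = 2 := (Finset.mem_filter.1 hv).2
    exact huv (no_two hact hconn hβ hPu hPv hdv hvu)
  have hbiu : 2 * P2.card ≤ (P2.biUnion Out).card := by
    rw [Finset.card_biUnion hdisj]
    calc 2 * P2.card = ∑ _v ∈ P2, 2 := by rw [Finset.sum_const, smul_eq_mul, mul_comm]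
    _ ≤ ∑ v ∈ P2, (Out v).card := Finset.sum_le_sum hout2
  have hsub : P2.biUnion Out ⊆
      (univ.filter (fun p : V × V => B.Adj p.1 p.2 ∧ p.1 ∈ A3)).image Prod.swap := by
    intro p hp
    obtain ⟨v, hv, hpv⟩ := Finset.mem_biUnion.1 hp
    simp only [hOut, Finset.mem_filter, Finset.mem_univ, true_and] at hpv
    refine Finset.mem_image.2 ⟨p.swap, ?_, Prod.swap_swap p⟩
    simp only [Finset.mem_filter, Finset.mem_univ, true_and, Prod.fst_swap, Prod.snd_swap]
    refine ⟨hpv.1.symm, ?_⟩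
    simp only [hA3, Finset.mem_filter, Finset.mem_univ, true_and]
    exact hpv.2.2
  have key1 : 2 * P2.card ≤ 2 * E - 2 * D2.card := by
    calc 2 * P2.card ≤ (P2.biUnion Out).card := hbiu
    _ ≤ ((univ.filter (fun p : V × V => B.Adj p.1 p.2 ∧ p.1 ∈ A3)).image Prod.swap).card :=
        Finset.card_le_card hsub
    _ ≤ (univ.filter (fun p : V × V => B.Adj p.1 p.2 ∧ p.1 ∈ A3)).card :=
        Finset.card_image_le
    _ = ∑ x ∈ A3, B.degree x := pairs_card _
    _ = 2 * E - 2 * D2.card := hsumA3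
  -- final arithmetic
  have hPivcard : (univ.filter (fun v => IsPivot B G v)).card = Piv.card := rfl
  rw [hPivcard]
  have c1 : (P2.card : ℤ) + (P4.card : ℤ) = (Piv.card : ℤ) := by exact_mod_cast hsplitPiv
  have c2 : (D2.card : ℤ) + (A3.card : ℤ) = (n : ℤ) := by exact_mod_cast hD2A3
  have c3 : 2 * (P2.card : ℤ) + 2 * (D2.card : ℤ) ≤ 2 * (E:ℤ) := by
    have h5 : 2 * P2.card + 2 * D2.card ≤ 2 * E := by omega
    exact_mod_cast h5
  linarith

end Count


/-! ### Leaf removal -/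

section Leaf

lemma reach_induce {s : Set V} {a b : V} (w : B.Walk a b) :
    ∀ (ha : a ∈ s) (hb : b ∈ s), (∀ x ∈ w.support, x ∈ s) →
      (B.induce s).Reachable ⟨a, ha⟩ ⟨b, hb⟩ := by
  induction w with
  | nil =>
    intro ha hb _
    exact Reachable.refl _
  | @cons a c b h p ih =>
    intro ha hb hsup
    have hc : c ∈ s := hsup c (by simp)
    have h1 : (B.induce s).Adj ⟨a, ha⟩ ⟨c, hc⟩ := h
    exact h1.reachable.trans (ih hc hb (fun x hx => hsup x (by simp [hx])))

lemma path_interior_degree [Fintype V] [DecidableEq V] [DecidableRel B.Adj] {a b : V}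
    (p : B.Walk a b) :
    p.IsPath → ∀ x ∈ p.support, x ≠ a → x ≠ b → 2 ≤ B.degree x := by
  induction p with
  | nil =>
    intro _ x hx hxa _
    simp only [Walk.support_nil, List.mem_singleton] at hx
    exact absurd hx hxa
  | @cons a c b h p ih =>
    intro hp x hx hxa hxb
    rw [Walk.support_cons, List.mem_cons] at hx
    rcases hx with rfl | hx
    · exact absurd rfl hxa
    · by_cases hxc : x = c
      · subst hxc
        cases p with
        | nil => exact absurd rfl hxb
        | @cons c d b h' p' =>
          have had : a ≠ d := by
            intro hcontra
            have hmem : a ∈ (Walk.cons h' p').support := by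
              rw [Walk.support_cons, List.mem_cons]
              right
              rw [hcontra]
              exact Walk.start_mem_support p'
            exact ((Walk.cons_isPath_iff _ _).1 hp).2 hmem
          have hsub : ({a, d} : Finset V) ⊆ B.neighborFinset x := by
            intro z hz
            rcases Finset.mem_insert.1 hz with rfl | hz
            · exact (mem_neighborFinset _ _ _).2 h.symm
            · rw [Finset.mem_singleton] at hz
              subst hz
              exact (mem_neighborFinset _ _ _).2 h'
          calc 2 = ({a, d} : Finset V).card := by
                rw [Finset.card_insert_of_notMem (by simpa using had), Finset.card_singleton]
          _ ≤ (B.neighborFinset x).card := Finset.card_le_card hsub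
          _ = B.degree x := card_neighborFinset_eq_degree _ _
      · exact ih hp.of_cons x hx hxc hxb

/-- The action of `G` on an invariant subset. -/
def subMul (s : Set V) (hs : ∀ (g : G) (x : V), x ∈ s → g • x ∈ s) : MulAction G ↥s where
  smul g x := ⟨g • ↑x, hs g ↑x x.2⟩
  one_smul x := Subtype.ext (one_smul G (x : V))
  mul_smul g h x := Subtype.ext (mul_smul g h (x : V))

end Leaf

universe u' w'

theorem aux : ∀ (N : ℕ) {V : Type u'} [Fintype V] (B : SimpleGraph V) (G : Type w') [Group G]
    [MulAction G V],
    Fintype.card V ≤ N →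
    (∀ (g : G) (a b : V), B.Adj a b → B.Adj (g • a) (g • b)) →
    B.Connected →
    2 ≤ (B.edgeSet.ncard : ℤ) - (Fintype.card V : ℤ) + 1 →
    (({v : V | IsPivot B G v}.ncard : ℤ))
      ≤ 3 * (((B.edgeSet.ncard : ℤ) - (Fintype.card V : ℤ) + 1) - 1) := by
  intro N
  induction N with
  | zero =>
    intro V _ B G _ _ hcard hact hconn hβ
    have : 0 < Fintype.card V := Fintype.card_pos_iff.2 hconn.nonempty
    omega
  | succ N ih =>
    intro V instV B G instG instA hcard hact hconn hβ
    classical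
    letI : DecidableRel B.Adj := Classical.decRel _
    have hEncard : B.edgeSet.ncard = B.edgeFinset.card := by
      rw [← SimpleGraph.coe_edgeFinset, Set.ncard_coe_finset]
    rw [hEncard] at hβ ⊢
    by_cases hmin : ∀ x : V, 2 ≤ B.degree x
    · exact count_minDeg2 hact hconn hβ hmin
    push_neg at hmin
    obtain ⟨ℓ0, hℓ0⟩ := hmin
    have hℓ0' : B.degree ℓ0 ≤ 1 := by omega
    -- no vertex of degree 0
    have hdeg0 : ∀ x : V, B.degree x ≠ 0 := by
      intro x hx
      refine no_closed_small hconn hβ (s := {x}) (x0 := x) rfl ?_ ?_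
      · rintro z rfl y hy
        exfalso
        have hmem : y ∈ B.neighborFinset z := (mem_neighborFinset _ _ _).2 hy
        have hempty : B.neighborFinset z = ∅ := by
          rw [← Finset.card_eq_zero, card_neighborFinset_eq_degree]
          exact hx
        rw [hempty] at hmem
        exact absurd hmem (Finset.notMem_empty _)
      · rintro z rfl
        omega
    -- no two adjacent leaves
    have hnoLL : ∀ a b : V, B.Adj a b → B.degree a ≤ 1 → B.degree b ≤ 1 → False := by
      intro a b hab ha hb
      refine no_closed_small hconn hβ (s := {a, b}) (x0 := a) (Set.mem_insert _ _) ?_ ?_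
      · intro x hx y hy
        rcases hx with rfl | hx
        · have h1 : y ∈ B.neighborFinset x := (mem_neighborFinset _ _ _).2 hy
          have h2 : B.neighborFinset x = {b} := by
            refine (Finset.eq_of_subset_of_card_le ?_ ?_).symm
            · intro z hz
              rw [Finset.mem_singleton] at hz
              subst hz
              exact (mem_neighborFinset _ _ _).2 hab
            · rw [card_neighborFinset_eq_degree, Finset.card_singleton]; exact ha
          rw [h2, Finset.mem_singleton] at h1
          subst h1
          exact Set.mem_insert_iff.2 (Or.inr rfl)
        · rcases hx with rfl
          have h1 : y ∈ B.neighborFinset x := (mem_neighborFinset _ _ _).2 hy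
          have h2 : B.neighborFinset x = {a} := by
            refine (Finset.eq_of_subset_of_card_le ?_ ?_).symm
            · intro z hz
              rw [Finset.mem_singleton] at hz
              subst hz
              exact (mem_neighborFinset _ _ _).2 hab.symm
            · rw [card_neighborFinset_eq_degree, Finset.card_singleton]; exact hb
          rw [h2, Finset.mem_singleton] at h1
          subst h1
          exact Set.mem_insert _ _
      · intro x hx
        rcases hx with rfl | hx
        · omega
        · rcases hx with rfl; omega
    set s : Set V := {v | 2 ≤ B.degree v} with hs
    set Lfin : Finset V := univ.filter (fun v => B.degree v ≤ 1) with hLfin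
    have hLne : ℓ0 ∈ Lfin := by
      rw [hLfin, Finset.mem_filter]
      exact ⟨Finset.mem_univ _, hℓ0'⟩
    have hcardsplit : (univ.filter (fun v => v ∈ s)).card + Lfin.card = Fintype.card V := by
      rw [← Finset.card_univ, hLfin]
      have : univ.filter (fun v => v ∈ s) = univ.filter (fun v => ¬ B.degree v ≤ 1) := by
        ext x
        simp only [Finset.mem_filter, Finset.mem_univ, true_and, hs, Set.mem_setOf_eq]
        omega
      rw [this, add_comm]
      exact Finset.card_filter_add_card_filter_not _
    have hcardS : Fintype.card ↥s + Lfin.card = Fintype.card V := by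
      rw [Fintype.card_subtype]
      exact hcardsplit
    -- invariance of s
    have hsinv : ∀ (g : G) (x : V), x ∈ s → g • x ∈ s := by
      intro g x hx
      rw [hs, Set.mem_setOf_eq, degree_smul hact]
      exact hx
    letI actS : MulAction G ↥s := subMul s hsinv
    set B' : SimpleGraph ↥s := B.induce s with hB'
    letI : DecidableRel B'.Adj := Classical.decRel _
    have hact' : ∀ (g : G) (a b : ↥s), B'.Adj a b → B'.Adj (g • a) (g • b) := by
      intro g a b hab
      exact hact g ↑a ↑b hab
    -- s nonempty
    have hsne : s.Nonempty := by
      by_contra hse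
      rw [Set.not_nonempty_iff_eq_empty] at hse
      refine no_closed_small hconn hβ (s := (Set.univ : Set V))
        (x0 := hconn.nonempty.some) trivial (fun _ _ _ _ => trivial) ?_
      intro x _
      by_contra hx
      have : x ∈ s := by rw [hs, Set.mem_setOf_eq]; omega
      rw [hse] at this
      exact this
    -- connectivity of B'
    have hconn' : B'.Connected := by
      rw [connected_iff]
      refine ⟨?_, ⟨⟨hsne.choose, hsne.choose_spec⟩⟩⟩
      rintro ⟨a, ha⟩ ⟨b, hb⟩
      obtain ⟨w⟩ := hconn.preconnected a b
      have hp := (w.toPath : B.Path a b)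
      refine reach_induce hp.1 ha hb ?_
      intro x hx
      by_cases hxa : x = a
      · subst hxa; exact ha
      by_cases hxb : x = b
      · subst hxb; exact hb
      rw [hs, Set.mem_setOf_eq]
      exact path_interior_degree hp.1 hp.2 x hx hxa hxb
    -- pivots are in s
    have hpivs : ∀ v : V, IsPivot B G v → v ∈ s := by
      intro v hv
      by_contra hvs
      have hd1 : B.degree v = 1 := by
        have : ¬ 2 ≤ B.degree v := hvs
        have := hdeg0 v
        omega
      have hcard1 : (B.neighborFinset v).card = 1 := by
        rw [card_neighborFinset_eq_degree]
        exact hd1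
      obtain ⟨w, hw⟩ := Finset.card_eq_one.1 hcard1
      have hadj : B.Adj v w := by
        have hmem : w ∈ B.neighborFinset v := by
          rw [hw]; exact Finset.mem_singleton_self w
        exact (mem_neighborFinset _ _ _).1 hmem
      have heven := hv w hadj
      have horb : MulAction.orbit (stabilizer G v) w = {w} := by
        apply Set.eq_singleton_iff_unique_mem.2
        refine ⟨MulAction.mem_orbit_self w, ?_⟩
        rintro x ⟨⟨g, hg⟩, rfl⟩
        have hg' : g • v = v := hg
        have : g • w ∈ B.neighborFinset v := by
          rw [mem_neighborFinset]
          have := hact g _ _ hadj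
          rwa [hg'] at this
        rw [hw, Finset.mem_singleton] at this
        exact this
      rw [horb, Set.ncard_singleton] at heven
      exact (Nat.not_even_iff_odd.2 odd_one) heven
    -- transfer of pivots
    have htrans : ∀ (v : V) (hv' : v ∈ s), IsPivot B G v → IsPivot B' G ⟨v, hv'⟩ := by
      intro v hv' hv w' hadj'
      have hBadj : B.Adj v ↑w' := hadj'
      have heven := hv ↑w' hBadj
      have himg : Subtype.val '' (MulAction.orbit (stabilizer G (⟨v, hv'⟩ : ↥s)) w')
          = MulAction.orbit (stabilizer G v) (↑w' : V) := by
        ext x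
        constructor
        · rintro ⟨y, ⟨⟨g, hg⟩, rfl⟩, rfl⟩
          refine ⟨⟨g, ?_⟩, rfl⟩
          rw [mem_stabilizer_iff]
          have h2 : g • (⟨v, hv'⟩ : ↥s) = ⟨v, hv'⟩ := hg
          exact congrArg Subtype.val h2
        · rintro ⟨⟨g, hg⟩, rfl⟩
          refine ⟨g • w', ⟨⟨g, ?_⟩, rfl⟩, rfl⟩
          rw [mem_stabilizer_iff]
          exact Subtype.ext hg
      rw [← himg, Set.ncard_image_of_injective _ Subtype.val_injective] at heven
      exact heven
    -- pivot count comparison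
    have hmono : {v : V | IsPivot B G v}.ncard ≤ {v' : ↥s | IsPivot B' G v'}.ncard := by
      refine Set.ncard_le_ncard_of_injOn
        (fun v => if h : v ∈ s then (⟨v, h⟩ : ↥s) else ⟨hsne.choose, hsne.choose_spec⟩)
        ?_ ?_ (Set.toFinite _)
      · intro v hv
        have hv' : v ∈ s := hpivs v hv
        rw [Set.mem_setOf_eq] at hv
        rw [Set.mem_setOf_eq, dif_pos hv']
        exact htrans v hv' hv
      · intro v1 h1 v2 h2 heq
        rw [Set.mem_setOf_eq] at h1 h2
        dsimp only at heq
        rw [dif_pos (hpivs v1 h1), dif_pos (hpivs v2 h2)] at heq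
        exact congrArg Subtype.val heq
    -- edge count
    have hdegL : ∀ x ∈ Lfin, B.degree x = 1 := by
      intro x hx
      rw [hLfin, Finset.mem_filter] at hx
      have := hdeg0 x
      omega
    have hEcount : 2 * B'.edgeFinset.card + 2 * Lfin.card = 2 * B.edgeFinset.card := by
      have hpairs' : (univ.filter fun p : ↥s × ↥s => B'.Adj p.1 p.2).card
          = 2 * B'.edgeFinset.card := by
        rw [← B'.sum_degrees_eq_twice_card_edges]
        have := pairs_card (B := B') (univ : Finset ↥s)
        rw [← this]
        congr 1
        ext p
        simp
      have hpairsV : (univ.filter fun p : V × V => B.Adj p.1 p.2 ∧ p.1 ∈ univ).card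
          = 2 * B.edgeFinset.card := by
        rw [pairs_card (B := B) univ]
        exact B.sum_degrees_eq_twice_card_edges
      -- bijection between subtype pairs and pairs with both coordinates in s
      have hbij : (univ.filter fun p : ↥s × ↥s => B'.Adj p.1 p.2).card
          = (univ.filter fun p : V × V => B.Adj p.1 p.2 ∧ p.1 ∈ s ∧ p.2 ∈ s).card := by
        refine Finset.card_bij (fun p _ => ((p.1 : V), (p.2 : V))) ?_ ?_ ?_
        · rintro ⟨x, y⟩ hp
          rw [Finset.mem_filter] at hp ⊢
          exact ⟨Finset.mem_univ _, hp.2, x.2, y.2⟩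
        · rintro ⟨x1, y1⟩ h1 ⟨x2, y2⟩ h2 heq
          rw [Prod.mk.injEq] at heq ⊢
          exact ⟨Subtype.ext heq.1, Subtype.ext heq.2⟩
        · rintro ⟨x, y⟩ hp
          rw [Finset.mem_filter] at hp
          refine ⟨(⟨x, hp.2.2.1⟩, ⟨y, hp.2.2.2⟩), ?_, rfl⟩
          rw [Finset.mem_filter]
          exact ⟨Finset.mem_univ _, hp.2.1⟩
      -- count pairs with first coordinate a leaf
      have hfstL : (univ.filter fun p : V × V => B.Adj p.1 p.2 ∧ p.1 ∈ Lfin).card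
          = Lfin.card := by
        rw [pairs_card (B := B) Lfin]
        rw [Finset.sum_congr rfl hdegL]
        simp
      -- no pairs between two leaves
      have hLL : (univ.filter fun p : V × V =>
          (B.Adj p.1 p.2 ∧ p.1 ∈ Lfin) ∧ p.2 ∈ Lfin).card = 0 := by
        rw [Finset.card_eq_zero, Finset.eq_empty_iff_forall_notMem]
        rintro ⟨x, y⟩ hp
        rw [Finset.mem_filter] at hp
        obtain ⟨-, ⟨hadj, hx⟩, hy⟩ := hp
        rw [hLfin, Finset.mem_filter] at hx hy
        exact hnoLL x y hadj hx.2 hy.2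
      -- membership dichotomy : x ∈ s ↔ x ∉ Lfin
      have hmem_iff : ∀ x : V, x ∈ s ↔ ¬ x ∈ Lfin := by
        intro x
        rw [hs, Set.mem_setOf_eq, hLfin, Finset.mem_filter]
        simp only [Finset.mem_univ, true_and]
        omega
      -- split total by first coordinate
      have hsplit1 : (univ.filter fun p : V × V => B.Adj p.1 p.2 ∧ p.1 ∈ s).card
            + (univ.filter fun p : V × V => B.Adj p.1 p.2 ∧ p.1 ∈ Lfin).card
          = 2 * B.edgeFinset.card := by
        rw [← hpairsV]
        have e1 : (univ.filter fun p : V × V => B.Adj p.1 p.2 ∧ p.1 ∈ s)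
            = (univ.filter fun p : V × V => B.Adj p.1 p.2).filter (fun p => ¬ p.1 ∈ Lfin) := by
          ext p
          simp only [Finset.mem_filter, Finset.mem_univ, true_and, and_assoc]
          rw [← hmem_iff p.1]
        have e2 : (univ.filter fun p : V × V => B.Adj p.1 p.2 ∧ p.1 ∈ Lfin)
            = (univ.filter fun p : V × V => B.Adj p.1 p.2).filter (fun p => p.1 ∈ Lfin) := by
          ext p
          simp only [Finset.mem_filter, Finset.mem_univ, true_and, and_assoc]
        have e3 : (univ.filter fun p : V × V => B.Adj p.1 p.2 ∧ p.1 ∈ univ)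
            = (univ.filter fun p : V × V => B.Adj p.1 p.2) := by
          ext p
          simp
        rw [e1, e2, e3, add_comm]
        exact Finset.card_filter_add_card_filter_not _
      -- split (fst ∈ s) by second coordinate
      have hsplit2 : (univ.filter fun p : V × V => B.Adj p.1 p.2 ∧ p.1 ∈ s ∧ p.2 ∈ s).card
            + (univ.filter fun p : V × V => (B.Adj p.1 p.2 ∧ p.1 ∈ s) ∧ p.2 ∈ Lfin).card
          = (univ.filter fun p : V × V => B.Adj p.1 p.2 ∧ p.1 ∈ s).card := by
        have e1 : (univ.filter fun p : V × V => B.Adj p.1 p.2 ∧ p.1 ∈ s ∧ p.2 ∈ s)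
            = (univ.filter fun p : V × V => B.Adj p.1 p.2 ∧ p.1 ∈ s).filter
                (fun p => ¬ p.2 ∈ Lfin) := by
          ext p
          simp only [Finset.mem_filter, Finset.mem_univ, true_and, and_assoc]
          rw [← hmem_iff p.2]
        have e2 : (univ.filter fun p : V × V => (B.Adj p.1 p.2 ∧ p.1 ∈ s) ∧ p.2 ∈ Lfin)
            = (univ.filter fun p : V × V => B.Adj p.1 p.2 ∧ p.1 ∈ s).filter
                (fun p => p.2 ∈ Lfin) := by
          ext p
          simp only [Finset.mem_filter, Finset.mem_univ, true_and, and_assoc]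
        rw [e1, e2, add_comm]
        exact Finset.card_filter_add_card_filter_not _
      -- pairs with snd a leaf and fst in s  =  Lfin.card  (via swap)
      have hswap : (univ.filter fun p : V × V => (B.Adj p.1 p.2 ∧ p.1 ∈ s) ∧ p.2 ∈ Lfin).card
          = (univ.filter fun p : V × V => (B.Adj p.1 p.2 ∧ p.1 ∈ Lfin) ∧ p.2 ∈ s).card := by
        refine Finset.card_bij (fun p _ => p.swap) ?_ ?_ ?_
        · rintro ⟨x, y⟩ hp
          rw [Finset.mem_filter] at hp ⊢
          exact ⟨Finset.mem_univ _, ⟨hp.2.1.1.symm, hp.2.2⟩, hp.2.1.2⟩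
        · rintro ⟨x1, y1⟩ h1 ⟨x2, y2⟩ h2 heq
          rw [Prod.ext_iff] at heq ⊢
          exact ⟨heq.2, heq.1⟩
        · rintro ⟨x, y⟩ hp
          rw [Finset.mem_filter] at hp
          refine ⟨(y, x), ?_, rfl⟩
          rw [Finset.mem_filter]
          exact ⟨Finset.mem_univ _, ⟨hp.2.1.1.symm, hp.2.2⟩, hp.2.1.2⟩
      have hsplit3 : (univ.filter fun p : V × V => (B.Adj p.1 p.2 ∧ p.1 ∈ Lfin) ∧ p.2 ∈ s).card
            + (univ.filter fun p : V × V => (B.Adj p.1 p.2 ∧ p.1 ∈ Lfin) ∧ p.2 ∈ Lfin).card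
          = (univ.filter fun p : V × V => B.Adj p.1 p.2 ∧ p.1 ∈ Lfin).card := by
        have e1 : (univ.filter fun p : V × V => (B.Adj p.1 p.2 ∧ p.1 ∈ Lfin) ∧ p.2 ∈ s)
            = (univ.filter fun p : V × V => B.Adj p.1 p.2 ∧ p.1 ∈ Lfin).filter
                (fun p => ¬ p.2 ∈ Lfin) := by
          ext p
          simp only [Finset.mem_filter, Finset.mem_univ, true_and, and_assoc]
          rw [← hmem_iff p.2]
        have e2 : (univ.filter fun p : V × V => (B.Adj p.1 p.2 ∧ p.1 ∈ Lfin) ∧ p.2 ∈ Lfin)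
            = (univ.filter fun p : V × V => B.Adj p.1 p.2 ∧ p.1 ∈ Lfin).filter
                (fun p => p.2 ∈ Lfin) := by
          ext p
          simp only [Finset.mem_filter, Finset.mem_univ, true_and, and_assoc]
        rw [e1, e2, add_comm]
        exact Finset.card_filter_add_card_filter_not _
      omega
    -- now apply the induction hypothesis
    have hE'ncard : B'.edgeSet.ncard = B'.edgeFinset.card := by
      rw [← SimpleGraph.coe_edgeFinset, Set.ncard_coe_finset]
    have hcard' : Fintype.card ↥s ≤ N := by
      have h1 : 1 ≤ Lfin.card := Finset.card_pos.2 ⟨ℓ0, hLne⟩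
      omega
    have hβ' : 2 ≤ (B'.edgeSet.ncard : ℤ) - (Fintype.card ↥s : ℤ) + 1 := by
      rw [hE'ncard]
      have h1 : 1 ≤ Lfin.card := Finset.card_pos.2 ⟨ℓ0, hLne⟩
      have e1 : (B'.edgeFinset.card : ℤ) = (B.edgeFinset.card : ℤ) - Lfin.card := by
        have : B'.edgeFinset.card + Lfin.card = B.edgeFinset.card := by omega
        push_cast [← this]
        ring
      have e2 : (Fintype.card ↥s : ℤ) = (Fintype.card V : ℤ) - Lfin.card := by
        push_cast [← hcardS]
        ring
      rw [e1, e2]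
      linarith
    have hIH := ih B' G hcard' hact' hconn' hβ'
    rw [hE'ncard] at hIH
    have e1 : (B'.edgeFinset.card : ℤ) = (B.edgeFinset.card : ℤ) - Lfin.card := by
      have : B'.edgeFinset.card + Lfin.card = B.edgeFinset.card := by omega
      push_cast [← this]
      ring
    have e2 : (Fintype.card ↥s : ℤ) = (Fintype.card V : ℤ) - Lfin.card := by
      push_cast [← hcardS]
      ring
    rw [e1, e2] at hIH
    have hmono' : (({v : V | IsPivot B G v}.ncard : ℤ))
        ≤ (({v' : ↥s | IsPivot B' G v'}.ncard : ℤ)) := by exact_mod_cast hmono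
    linarith

end PivotAux

/-- If a group `G` acts by graph automorphisms on a finite connected graph `B` with
`β(B) ≥ 2`, then the number of `G`-pivot vertices of `B` is at most `3(β(B) - 1)`. -/
theorem stmt_7 {V : Type*} [Fintype V] (B : SimpleGraph V)
    (G : Type*) [Group G] [MulAction G V]
    (hact : ∀ (g : G) (a b : V), B.Adj a b → B.Adj (g • a) (g • b))
    (hconn : B.Connected)
    (hβ : 2 ≤ (B.edgeSet.ncard : ℤ) - (Fintype.card V : ℤ) + 1) :
    ({v : V | IsPivot B G v}.ncard : ℤ)
      ≤ 3 * (((B.edgeSet.ncard : ℤ) - (Fintype.card V : ℤ) + 1) - 1) := by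
  exact PivotAux.aux (Fintype.card V) B G le_rfl hact hconn hβ
end

section
/- Let X be a projective curve over a perfect field k. Then the bipartite intersection graph B_X of X (whose cyan vertices are the irreducible components of X ×_k k_alg and whose pink vertices are the points lying on at least two distinct irreducible components, with adjacency given by incidence) is connected if and only if X is geometrically connected. -/
open AlgebraicGeometry CategoryTheory Opposite Limits

variable {K : Type} [Field K]

/-- The ring homomorphism `K →+* Γ(C, U)` for a scheme `C` over `Spec K`. -/
noncomputable def secAlgHom (C : Scheme) (f : C ⟶ Spec (CommRingCat.of K)) (U : C.Opens) :
    K →+* Γ(C, U) :=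
  RingHom.comp (C.presheaf.map (homOfLE (le_top : U ≤ ⊤)).op).hom
    (RingHom.comp f.appTop.hom (Scheme.ΓSpecIso (CommRingCat.of K)).inv.hom)

/-- The `K`-module structure on `Γ(C, U)` for a scheme `C` over `Spec K`. -/
noncomputable def secModule (C : Scheme) (f : C ⟶ Spec (CommRingCat.of K)) (U : C.Opens) :
    Module K Γ(C, U) :=
  letI := (secAlgHom C f U).toAlgebra
  Algebra.toModule

lemma secAlgHom_res (C : Scheme) (f : C ⟶ Spec (CommRingCat.of K)) {U V : C.Opens}
    (h : V ≤ U) (c : K) :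
    (C.presheaf.map (homOfLE h).op) (secAlgHom C f U c) = secAlgHom C f V c := by
  simp only [secAlgHom, RingHom.comp_apply]
  rw [← CommRingCat.comp_apply, ← Functor.map_comp, ← op_comp, homOfLE_comp]

lemma res_smul (C : Scheme) (f : C ⟶ Spec (CommRingCat.of K)) {U V : C.Opens}
    (h : V ≤ U) (c : K) (x : Γ(C, U)) :
    letI := secModule C f U
    letI := secModule C f V
    (C.presheaf.map (homOfLE h).op) (c • x)
      = c • ((C.presheaf.map (homOfLE h).op) x) := by
  letI := secModule C f U
  letI := secModule C f V
  show (C.presheaf.map (homOfLE h).op) (secAlgHom C f U c * x) = secAlgHom C f V c * _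
  rw [map_mul, secAlgHom_res]

/-- The dimension over `K` of the first Čech cohomology group of the structure sheaf of a
scheme `C` over `K` with respect to the family of opens `U`. -/
noncomputable def cechH1finrank (C : Scheme) (f : C ⟶ Spec (CommRingCat.of K))
    {ι : Type} (U : ι → C.Opens) : ℕ :=
  letI : ∀ W : C.Opens, Module K Γ(C, W) := fun W => secModule C f W
  let d0 : ((i : ι) → Γ(C, U i)) →ₗ[K] ((p : ι × ι) → Γ(C, U p.1 ⊓ U p.2)) :=
    { toFun := fun s p =>
        (C.presheaf.map (homOfLE (inf_le_right : U p.1 ⊓ U p.2 ≤ U p.2)).op) (s p.2)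
          - (C.presheaf.map (homOfLE (inf_le_left : U p.1 ⊓ U p.2 ≤ U p.1)).op) (s p.1)
      map_add' := by
        intro s t; funext p
        simp only [Pi.add_apply, map_add]; ring
      map_smul' := by
        intro c s; funext p
        simp only [Pi.smul_apply, RingHom.id_apply, res_smul C f, smul_sub] }
  let d1 : ((p : ι × ι) → Γ(C, U p.1 ⊓ U p.2)) →ₗ[K]
      ((q : ι × ι × ι) → Γ(C, (U q.1 ⊓ U q.2.1) ⊓ U q.2.2)) :=
    { toFun := fun t q =>
        (C.presheaf.map (homOfLE (inf_le_left :
            (U q.1 ⊓ U q.2.1) ⊓ U q.2.2 ≤ U q.1 ⊓ U q.2.1)).op) (t (q.1, q.2.1))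
          + (C.presheaf.map (homOfLE (le_inf (inf_le_left.trans inf_le_right) inf_le_right :
              (U q.1 ⊓ U q.2.1) ⊓ U q.2.2 ≤ U q.2.1 ⊓ U q.2.2)).op) (t (q.2.1, q.2.2))
          - (C.presheaf.map (homOfLE (le_inf (inf_le_left.trans inf_le_left) inf_le_right :
              (U q.1 ⊓ U q.2.1) ⊓ U q.2.2 ≤ U q.1 ⊓ U q.2.2)).op) (t (q.1, q.2.2))
      map_add' := by
        intro s t; funext q
        simp only [Pi.add_apply, map_add]; ring
      map_smul' := by
        intro c s; funext q
        simp only [Pi.smul_apply, RingHom.id_apply, res_smul C f, smul_sub, smul_add] }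
  Module.finrank K
    ((LinearMap.ker d1) ⧸
      (Submodule.comap (LinearMap.ker d1).subtype (LinearMap.range d0)))

/-- `C` (a scheme over `K` via `f`) has arithmetic genus `g` over `K`:
for every finite affine open cover, `g = 1 - dim_K H⁰(C, O_C) + dim_K H¹(C, O_C)`,
where the cohomology is computed as Čech cohomology with respect to the cover;
moreover a finite affine open cover is required to exist. -/
noncomputable def HasGenus (C : Scheme) (f : C ⟶ Spec (CommRingCat.of K)) (g : ℤ) : Prop :=
  (∃ (n : ℕ) (U : Fin n → C.Opens), iSup U = ⊤ ∧ ∀ i, IsAffineOpen (U i)) ∧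
  ∀ (n : ℕ) (U : Fin n → C.Opens), iSup U = ⊤ → (∀ i, IsAffineOpen (U i)) →
    letI := secModule C f ⊤
    g = 1 - (Module.finrank K Γ(C, ⊤) : ℤ) + (cechH1finrank C f U : ℤ)

/-- A projective curve over `K`: a proper `K`-scheme of dimension `1`
(properness is equivalent to projectivity for curves over a field). -/
def IsProjectiveCurve (C : Scheme) (f : C ⟶ Spec (CommRingCat.of K)) : Prop :=
  IsProper f ∧ topologicalKrullDim C = 1

/-- A regular local ring. -/
def IsRegLocalRing (R : Type*) [CommRing R] [IsLocalRing R] : Prop :=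
  IsNoetherianRing R ∧ ∃ s : Finset R, Ideal.span (s : Set R) = IsLocalRing.maximalIdeal R ∧
    (s.card : WithBot ℕ∞) = ringKrullDim R

/-- A scheme is regular if all of its stalks are regular local rings. -/
def IsRegularScheme (C : Scheme) : Prop :=
  ∀ x : C, IsRegLocalRing (C.presheaf.stalk x)

/-- The degree `[κ(x) : K]` of a point `x` of a scheme `C` over `K`. -/
noncomputable def pointDegree (C : Scheme) (f : C ⟶ Spec (CommRingCat.of K)) (x : C) : ℕ :=
  letI : Algebra K (C.residueField x) :=
    (RingHom.comp (C.Γevaluation x).hom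
      (RingHom.comp f.appTop.hom (Scheme.ΓSpecIso (CommRingCat.of K)).inv.hom) : K →+* _).toAlgebra
  Module.finrank K (C.residueField x)

/-- The canonical homomorphism from `K` to the function field of an irreducible scheme `C`
over `K`. -/
noncomputable def ffHom (C : Scheme) [IrreducibleSpace C] (f : C ⟶ Spec (CommRingCat.of K)) :
    K →+* C.functionField :=
  letI : Nonempty (⊤ : C.Opens) := ⟨⟨(inferInstance : Nonempty C).some, trivial⟩⟩
  RingHom.comp (algebraMap Γ(C, ⊤) C.functionField)
    (RingHom.comp f.appTop.hom (Scheme.ΓSpecIso (CommRingCat.of K)).inv.hom)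

/-- `C` is birational over `K` to the projective line over `L`, i.e. the function field of `C`
is `K`-isomorphic to the rational function field `L(t)`. -/
def IsBirationalToP1 (C : Scheme) [IrreducibleSpace C] (f : C ⟶ Spec (CommRingCat.of K))
    (L : Type) [Field L] [Algebra K L] : Prop :=
  ∃ e : C.functionField ≃+* RatFunc L,
    ∀ c : K, e (ffHom C f c) = algebraMap K (RatFunc L) c

attribute [local instance] MvPolynomial.gradedAlgebra

/-- The constants, as a ring homomorphism to the degree-zero part of `K[X,Y,Z]`. -/
noncomputable def constHom (K : Type) [Field K] :
    K →+* (MvPolynomial.homogeneousSubmodule (Fin 3) K 0) where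
  toFun c := ⟨MvPolynomial.C c, by
    simp [MvPolynomial.mem_homogeneousSubmodule, MvPolynomial.isHomogeneous_C]⟩
  map_one' := by ext; simp
  map_mul' x y := by ext; simp
  map_zero' := by ext; simp
  map_add' x y := by ext; simp

/-- The structure morphism of the projective plane `ℙ²_K = Proj K[X,Y,Z]`. -/
noncomputable def projPlaneToSpec (K : Type) [Field K] :
    Proj (MvPolynomial.homogeneousSubmodule (Fin 3) K) ⟶ Spec (CommRingCat.of K) :=
  Proj.toSpecZero _ ≫ Spec.map (CommRingCat.ofHom (constHom K))

/-- The dehomogenization `q/f²` of a quadric `q` on the affine chart `D₊(f)` of `ℙ²_K`. -/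
noncomputable def qOnChart {K : Type} [Field K] (q f : MvPolynomial (Fin 3) K)
    (hq : q ∈ MvPolynomial.homogeneousSubmodule (Fin 3) K 2)
    (hf : f ∈ MvPolynomial.homogeneousSubmodule (Fin 3) K 1) :
    HomogeneousLocalization.Away (MvPolynomial.homogeneousSubmodule (Fin 3) K) f :=
  HomogeneousLocalization.mk
    ⟨2, ⟨q, hq⟩, ⟨f ^ 2, by simpa using SetLike.pow_mem_graded 2 hf⟩, ⟨2, rfl⟩⟩

/-- `C` is a conic over `K`: a projective curve over `K` which is isomorphic over `K` to the
closed subscheme of `ℙ²_K` cut out by a homogeneous polynomial `q` of degree `2`; the latter is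
expressed by a closed immersion `ι : C ⟶ ℙ²_K` over `K` which, on each affine chart `D₊(f)`
(`f` linear), identifies `C` with `Spec` of the quotient by the dehomogenization of `q`. -/
def IsConic (C : Scheme) (fC : C ⟶ Spec (CommRingCat.of K)) : Prop :=
  IsProjectiveCurve C fC ∧
  ∃ (q : MvPolynomial (Fin 3) K)
    (hq : q ∈ MvPolynomial.homogeneousSubmodule (Fin 3) K 2)
    (ι : C ⟶ Proj (MvPolynomial.homogeneousSubmodule (Fin 3) K)),
    IsClosedImmersion ι ∧ ι ≫ projPlaneToSpec K = fC ∧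
    ∀ (f : MvPolynomial (Fin 3) K)
      (hf : f ∈ MvPolynomial.homogeneousSubmodule (Fin 3) K 1),
      ∃ e : pullback ι (Proj.awayι _ f hf one_pos) ≅
          Spec (CommRingCat.of
            ((HomogeneousLocalization.Away (MvPolynomial.homogeneousSubmodule (Fin 3) K) f)
              ⧸ Ideal.span {qOnChart q f hq hf})),
        e.hom ≫ Spec.map (CommRingCat.ofHom (Ideal.Quotient.mk _))
          = pullback.snd ι (Proj.awayι _ f hf one_pos)

section IntersectionGraph

variable {k : Type} [Field k]

/-- The base change of `X` to the algebraic closure of `k`. -/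
noncomputable def baseChangeToAlgClosure (X : Scheme) (f : X ⟶ Spec (CommRingCat.of k)) :
    Scheme :=
  pullback f (Spec.map (CommRingCat.ofHom (algebraMap k (AlgebraicClosure k))))

/-- The set of points of a topological space lying on at least two distinct irreducible
components. -/
def multiComponentPoints (T : Type*) [TopologicalSpace T] : Set T :=
  {x : T | ∃ Y Z : Set T, Y ∈ irreducibleComponents T ∧ Z ∈ irreducibleComponents T ∧
    Y ≠ Z ∧ x ∈ Y ∧ x ∈ Z}

/-- The bipartite intersection graph of a topological space: its vertices are the irreducible
components together with the points lying on at least two distinct irreducible components, a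
component and a point being adjacent if and only if the point lies on the component. -/
def intersectionGraph (T : Type*) [TopologicalSpace T] :
    SimpleGraph (↥(irreducibleComponents T) ⊕ ↥(multiComponentPoints T)) :=
  SimpleGraph.fromRel (fun a b =>
    ∃ (Y : ↥(irreducibleComponents T)) (P : ↥(multiComponentPoints T)),
      a = Sum.inl Y ∧ b = Sum.inr P ∧ (P : T) ∈ (Y : Set T))


section GraphAux

variable {T : Type*} [TopologicalSpace T]

/-- Auxiliary predicate: the vertex lies in the connected component of `x₀`. -/
def goodVert (x₀ : T) : (↥(irreducibleComponents T) ⊕ ↥(multiComponentPoints T)) → Prop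
  | Sum.inl Y => (Y : Set T) ⊆ connectedComponent x₀
  | Sum.inr P => (P : T) ∈ connectedComponent x₀

lemma goodVert_of_adj {x₀ : T} {u v : ↥(irreducibleComponents T) ⊕ ↥(multiComponentPoints T)}
    (h : (intersectionGraph T).Adj u v) (hu : goodVert x₀ u) : goodVert x₀ v := by
  obtain ⟨-, h | h⟩ := h <;> obtain ⟨Y, P, h1, h2, hmem⟩ := h
  · subst h1; subst h2
    exact hu hmem
  · subst h1; subst h2
    have hYP : (Y : Set T) ⊆ connectedComponent (P : T) :=
      (Y.2.1.2.isPreconnected).subset_connectedComponent hmem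
    have hu' : (P : T) ∈ connectedComponent x₀ := hu
    exact hYP.trans (connectedComponent_eq hu').symm.subset

lemma goodVert_of_reachable {x₀ : T}
    {u v : ↥(irreducibleComponents T) ⊕ ↥(multiComponentPoints T)}
    (h : (intersectionGraph T).Reachable u v) (hu : goodVert x₀ u) : goodVert x₀ v := by
  obtain ⟨w⟩ := h
  induction w with
  | nil => exact hu
  | cons hadj _ ih => exact ih (goodVert_of_adj hadj hu)

lemma adj_of_mem' {Y : ↥(irreducibleComponents T)} {P : ↥(multiComponentPoints T)}
    (h : (P : T) ∈ (Y : Set T)) : (intersectionGraph T).Adj (Sum.inl Y) (Sum.inr P) :=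
  ⟨by simp, Or.inl ⟨Y, P, rfl, rfl, h⟩⟩

lemma intersectionGraph_connected_iff [TopologicalSpace.NoetherianSpace T] :
    (intersectionGraph T).Connected ↔ ConnectedSpace T := by
  constructor
  · intro hconn
    have hpre := hconn.preconnected
    have hTne : Nonempty T := by
      obtain ⟨v⟩ := hconn.nonempty
      cases v with
      | inl Y => exact ⟨Y.2.1.1.some⟩
      | inr P => exact ⟨P.1⟩
    obtain ⟨x₀⟩ := hTne
    rw [connectedSpace_iff_connectedComponent]
    refine ⟨x₀, Set.eq_univ_iff_forall.mpr fun x => ?_⟩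
    have h0 : goodVert x₀ (Sum.inl ⟨irreducibleComponent x₀,
        irreducibleComponent_mem_irreducibleComponents x₀⟩) := by
      exact (isIrreducible_irreducibleComponent.2.isPreconnected).subset_connectedComponent
        mem_irreducibleComponent
    have := goodVert_of_reachable
      (hpre (Sum.inl ⟨irreducibleComponent x₀, irreducibleComponent_mem_irreducibleComponents x₀⟩)
        (Sum.inl ⟨irreducibleComponent x, irreducibleComponent_mem_irreducibleComponents x⟩)) h0
    exact this mem_irreducibleComponent
  · intro hc
    have hfin : (irreducibleComponents T).Finite :=
      TopologicalSpace.NoetherianSpace.finite_irreducibleComponents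
    haveI : Finite ↥(irreducibleComponents T) := hfin.to_subtype
    obtain ⟨x₀⟩ := hc.toNonempty
    have hcomp : ∀ Y Z : ↥(irreducibleComponents T),
        (intersectionGraph T).Reachable (Sum.inl Y) (Sum.inl Z) := by
      intro Y Z
      by_contra hZ
      set S : Set ↥(irreducibleComponents T) :=
        {W | (intersectionGraph T).Reachable (Sum.inl Y) (Sum.inl W)} with hS
      set A : Set T := ⋃ (W : ↥(irreducibleComponents T)) (_ : W ∈ S), (W : Set T) with hA
      set B : Set T := ⋃ (W : ↥(irreducibleComponents T)) (_ : W ∉ S), (W : Set T) with hB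
      have key : ∀ (W W' : ↥(irreducibleComponents T)) (x : T), W ∈ S → x ∈ (W : Set T) →
          x ∈ (W' : Set T) → W' ∈ S := by
        intro W W' x hW hxW hxW'
        by_cases hWW' : W = W'
        · exact hWW' ▸ hW
        · have hne : (W : Set T) ≠ (W' : Set T) := fun h => hWW' (Subtype.ext h)
          have hP : x ∈ multiComponentPoints T := ⟨W, W', W.2, W'.2, hne, hxW, hxW'⟩
          exact hW.trans ((adj_of_mem' (P := ⟨x, hP⟩) hxW).reachable.trans
            (adj_of_mem' (P := ⟨x, hP⟩) (Y := W') hxW').symm.reachable)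
      have hAB : A ∪ B = Set.univ := by
        refine Set.eq_univ_iff_forall.mpr fun x => ?_
        set W : ↥(irreducibleComponents T) :=
          ⟨irreducibleComponent x, irreducibleComponent_mem_irreducibleComponents x⟩
        by_cases hW : W ∈ S
        · exact Or.inl (Set.mem_biUnion hW mem_irreducibleComponent)
        · exact Or.inr (Set.mem_biUnion hW mem_irreducibleComponent)
      have hdisj : A ∩ B = ∅ := by
        rw [Set.eq_empty_iff_forall_notMem]
        rintro x ⟨hxA, hxB⟩
        obtain ⟨W, hW, hxW⟩ := Set.mem_iUnion₂.mp hxA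
        obtain ⟨W', hW', hxW'⟩ := Set.mem_iUnion₂.mp hxB
        exact hW' (key W W' x hW hxW hxW')
      have hAc : IsClosed A := isClosed_iUnion_of_finite fun W =>
        isClosed_iUnion_of_finite fun _ => isClosed_of_mem_irreducibleComponents _ W.2
      have hBc : IsClosed B := isClosed_iUnion_of_finite fun W =>
        isClosed_iUnion_of_finite fun _ => isClosed_of_mem_irreducibleComponents _ W.2
      have hclopen : IsClopen A := by
        refine ⟨hAc, ?_⟩
        have : A = Bᶜ := by
          apply subset_antisymm
          · intro x hx hxB
            exact (Set.eq_empty_iff_forall_notMem.mp hdisj x) ⟨hx, hxB⟩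
          · intro x hx
            rcases (Set.eq_univ_iff_forall.mp hAB x) with h | h
            · exact h
            · exact absurd h hx
        rw [this]
        exact hBc.isOpen_compl
      rcases isClopen_iff.mp hclopen with h | h
      · have : (Y : Set T).Nonempty := Y.2.1.1
        obtain ⟨y, hy⟩ := this
        have : y ∈ A := Set.mem_biUnion (SimpleGraph.Reachable.refl _) hy
        rw [h] at this
        exact this
      · have : (Z : Set T).Nonempty := Z.2.1.1
        obtain ⟨z, hz⟩ := this
        have hzA : z ∈ A := h ▸ Set.mem_univ z
        obtain ⟨W, hW, hzW⟩ := Set.mem_iUnion₂.mp hzA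
        exact hZ (key W Z z hW hzW hz)
    have hinr : ∀ P : ↥(multiComponentPoints T), ∃ Y : ↥(irreducibleComponents T),
        (intersectionGraph T).Adj (Sum.inl Y) (Sum.inr P) := by
      rintro ⟨x, Y, Z, hY, hZ, hne, hxY, hxZ⟩
      exact ⟨⟨Y, hY⟩, adj_of_mem' hxY⟩
    rw [SimpleGraph.connected_iff]
    constructor
    · intro a b
      have toInl : ∀ a, ∃ Y : ↥(irreducibleComponents T),
          (intersectionGraph T).Reachable (Sum.inl Y) a := by
        intro a
        cases a with
        | inl Y => exact ⟨Y, SimpleGraph.Reachable.refl _⟩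
        | inr P => obtain ⟨Y, hY⟩ := hinr P; exact ⟨Y, hY.reachable⟩
      obtain ⟨Ya, hYa⟩ := toInl a
      obtain ⟨Yb, hYb⟩ := toInl b
      exact hYa.symm.trans ((hcomp Ya Yb).trans hYb)
    · exact ⟨Sum.inl ⟨irreducibleComponent x₀, irreducibleComponent_mem_irreducibleComponents x₀⟩⟩

end GraphAux

lemma noetherianSpace_of_proper_over_field {K : Type} [Field K] (T : Scheme)
    (g : T ⟶ Spec (CommRingCat.of K)) [UniversallyClosed g] [LocallyOfFiniteType g] :
    TopologicalSpace.NoetherianSpace T := by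
  haveI : CompactSpace T := compactSpace_of_universallyClosed g
  have hV : ∀ V : T.affineOpens, TopologicalSpace.NoetherianSpace (V.1 : Set T) := by
    intro V
    have hle : V.1 ≤ g ⁻¹ᵁ (⊤ : (Spec (CommRingCat.of K)).Opens) := by simp
    have hft := LocallyOfFiniteType.finiteType_of_affine_subset
      (f := g) (isAffineOpen_top _) V.2 hle
    haveI : IsNoetherianRing Γ(Spec (CommRingCat.of K), ⊤) :=
      isNoetherianRing_of_ringEquiv (CommRingCat.of K)
        (Scheme.ΓSpecIso (CommRingCat.of K)).symm.commRingCatIsoToRingEquiv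
    letI := (g.appLE ⊤ V.1 hle).hom.toAlgebra
    haveI : Algebra.FiniteType Γ(Spec (CommRingCat.of K), ⊤) Γ(T, V.1) := hft
    haveI : IsNoetherianRing Γ(T, V.1) :=
      Algebra.FiniteType.isNoetherianRing Γ(Spec (CommRingCat.of K), ⊤) Γ(T, V.1)
    exact noetherianSpace_of_isAffineOpen V.1 V.2
  have hcov : (Set.univ : Set T) ⊆ ⋃ V : T.affineOpens, (V.1 : Set T) := by
    intro x _
    have hx : x ∈ (⊤ : T.Opens) := trivial
    rw [← iSup_affineOpens_eq_top T] at hx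
    obtain ⟨V, hVx⟩ := TopologicalSpace.Opens.mem_iSup.mp hx
    exact Set.mem_iUnion.mpr ⟨V, hVx⟩
  obtain ⟨s, hs⟩ := isCompact_univ.elim_finite_subcover
    (fun V : T.affineOpens => (V.1 : Set T)) (fun V => V.1.2) hcov
  rw [← TopologicalSpace.noetherian_univ_iff]
  have huniv : (Set.univ : Set T)
      = ⋃ V : {V : T.affineOpens // V ∈ s}, ((V : T.affineOpens).1 : Set T) := by
    apply subset_antisymm
    · intro x hx
      obtain ⟨V, hVs, hxV⟩ := Set.mem_iUnion₂.mp (hs hx)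
      exact Set.mem_iUnion.mpr ⟨⟨V, hVs⟩, hxV⟩
    · exact Set.subset_univ _
  rw [huniv]
  haveI : ∀ V : {V : T.affineOpens // V ∈ s},
      TopologicalSpace.NoetherianSpace ((V : T.affineOpens).1 : Set T) := fun V => hV V
  exact TopologicalSpace.NoetherianSpace.iUnion _


/-- For a projective curve `X` over a perfect field `k`, the bipartite intersection graph of
`X ×_k k_alg` is connected if and only if `X` is geometrically connected. -/
theorem stmt_18 [PerfectField k] (X : Scheme) (f : X ⟶ Spec (CommRingCat.of k))
    (hcurve : IsProjectiveCurve X f) :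
    (intersectionGraph (baseChangeToAlgClosure X f)).Connected
      ↔ ConnectedSpace (baseChangeToAlgClosure X f) := by
  haveI hp : IsProper f := hcurve.1
  haveI hg : IsProper (pullback.snd f
      (Spec.map (CommRingCat.ofHom (algebraMap k (AlgebraicClosure k))))) :=
    inferInstance
  haveI : TopologicalSpace.NoetherianSpace (baseChangeToAlgClosure X f) :=
    @noetherianSpace_of_proper_over_field _ _ (baseChangeToAlgClosure X f)
      (pullback.snd f (Spec.map (CommRingCat.ofHom (algebraMap k (AlgebraicClosure k)))))
      hg.toUniversallyClosed hg.toLocallyOfFiniteType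
  exact intersectionGraph_connected_iff
end IntersectionGraph
end

section
/- Let n ≥ 3 be even and let B be the cycle graph on n vertices, with G' ≤ Aut(B) the dihedral subgroup of order n (index 2, noncyclic). Then the vertices of B form exactly two G'-orbits, and if n ≡ 2 mod 4, every vertex of B is a G'-pivot vertex, so the number of G'-orbits of G'-pivot vertices equals 2. -/
open SimpleGraph

/-- The cycle graph on `ℤ/n`. -/
def cycGraph (n : ℕ) : SimpleGraph (ZMod n) :=
  SimpleGraph.fromRel (fun i j => j = i + 1)

/-- The dihedral subgroup of order `n` of the automorphism group of the cycle graph on `n`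
vertices (`n ≥ 3` even): it is generated by the rotation by `2` and a reflection. -/
def dihedralHalf (n : ℕ) : Subgroup (Equiv.Perm (ZMod n)) :=
  Subgroup.closure {Equiv.addLeft (2 : ZMod n), Equiv.neg (ZMod n)}


section
variable {n : ℕ}

lemma dh_form {g : Equiv.Perm (ZMod n)} (hg : g ∈ dihedralHalf n) :
    (∃ c : ZMod n, ∀ x, g x = x + 2*c) ∨ (∃ c : ZMod n, ∀ x, g x = -x + 2*c) := by
  induction hg using Subgroup.closure_induction with
  | mem x hx =>
    rcases hx with h | h
    · subst h; left; exact ⟨1, fun x => by simp [Equiv.coe_addLeft]; ring⟩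
    · subst h; right; exact ⟨0, fun x => by simp⟩
  | one => left; exact ⟨0, fun x => by simp⟩
  | mul a b ha hb iha ihb =>
    rcases iha with ⟨c, hc⟩ | ⟨c, hc⟩ <;> rcases ihb with ⟨d, hd⟩ | ⟨d, hd⟩
    · left; exact ⟨d + c, fun x => by simp [Equiv.Perm.mul_apply, hc, hd]; ring⟩
    · right; exact ⟨d + c, fun x => by simp [Equiv.Perm.mul_apply, hc, hd]; ring⟩
    · right; exact ⟨c - d, fun x => by simp [Equiv.Perm.mul_apply, hc, hd]; ring⟩
    · left; exact ⟨c - d, fun x => by simp [Equiv.Perm.mul_apply, hc, hd]; ring⟩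
  | inv a ha iha =>
    rcases iha with ⟨c, hc⟩ | ⟨c, hc⟩
    · left
      refine ⟨-c, fun x => ?_⟩
      have h1 : a (x + 2*(-c)) = x := by rw [hc]; ring
      calc a⁻¹ x = a⁻¹ (a (x + 2*(-c))) := by rw [h1]
        _ = x + 2*(-c) := Equiv.symm_apply_apply a _
    · right
      refine ⟨c, fun x => ?_⟩
      have h1 : a (-x + 2*c) = x := by rw [hc]; ring
      calc a⁻¹ x = a⁻¹ (a (-x + 2*c)) := by rw [h1]
        _ = -x + 2*c := Equiv.symm_apply_apply a _

lemma addLeft_even_mem [NeZero n] (c : ZMod n) : Equiv.addLeft (2 * c) ∈ dihedralHalf n := by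
  have h : ∀ m : ℕ, Equiv.addLeft (2 * (m : ZMod n)) ∈ dihedralHalf n := by
    intro m
    induction m with
    | zero =>
      have : Equiv.addLeft (2 * ((0:ℕ) : ZMod n)) = 1 := by ext x; simp
      rw [this]; exact one_mem _
    | succ m ih =>
      have h2 : Equiv.addLeft (2 : ZMod n) ∈ dihedralHalf n :=
        Subgroup.subset_closure (Or.inl rfl)
      have heq : Equiv.addLeft (2 * ((m+1 : ℕ) : ZMod n))
          = Equiv.addLeft (2:ZMod n) * Equiv.addLeft (2 * (m : ZMod n)) := by
        ext x; simp [Equiv.Perm.mul_apply, Equiv.coe_addLeft]; ring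
      rw [heq]; exact mul_mem h2 ih
  have := h c.val
  rwa [ZMod.natCast_val, ZMod.cast_id] at this

lemma refl_mem [NeZero n] (c : ZMod n) :
    Equiv.addLeft (2 * c) * Equiv.neg (ZMod n) ∈ dihedralHalf n :=
  mul_mem (addLeft_even_mem c) (Subgroup.subset_closure (Or.inr rfl))

lemma orbit_eq [NeZero n] (v : ZMod n) :
    MulAction.orbit (dihedralHalf n) v = {x | ∃ k : ZMod n, x = v + 2 * k} := by
  ext x
  constructor
  · rintro ⟨⟨g, hg⟩, rfl⟩
    rcases dh_form hg with ⟨c, hc⟩ | ⟨c, hc⟩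
    · exact ⟨c, by simpa [Subgroup.smul_def, Equiv.Perm.smul_def] using hc v⟩
    · refine ⟨c - v, ?_⟩
      have := hc v
      simp only [Subgroup.smul_def, Equiv.Perm.smul_def]
      rw [this]; ring
  · rintro ⟨k, rfl⟩
    refine ⟨⟨Equiv.addLeft (2*k), addLeft_even_mem k⟩, ?_⟩
    simp [Subgroup.smul_def, Equiv.Perm.smul_def, Equiv.coe_addLeft]; ring

lemma stab_orbit [NeZero n] (v w : ZMod n) :
    MulAction.orbit (MulAction.stabilizer (dihedralHalf n) v) w = {w, 2*v - w} := by
  ext x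
  constructor
  · rintro ⟨⟨⟨g, hg⟩, hfix⟩, rfl⟩
    have hfix' : g v = v := by
      simpa [Subgroup.smul_def, Equiv.Perm.smul_def] using hfix
    rcases dh_form hg with ⟨c, hc⟩ | ⟨c, hc⟩
    · left
      have h0 : v + 2*c = v := by rw [← hc]; exact hfix'
      have h0' : (2*c : ZMod n) = 0 := by linear_combination h0
      simp [Subgroup.smul_def, Equiv.Perm.smul_def, hc w, h0']
    · right
      have h0 : -v + 2*c = v := by rw [← hc]; exact hfix'
      have h0' : (2*c : ZMod n) = 2*v := by linear_combination h0
      simp only [Subgroup.smul_def, Equiv.Perm.smul_def, Set.mem_singleton_iff]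
      rw [hc w, h0']; ring
  · rintro (rfl | rfl)
    · exact ⟨1, by simp⟩
    · refine ⟨⟨⟨Equiv.addLeft (2*v) * Equiv.neg (ZMod n), refl_mem v⟩, ?_⟩, ?_⟩
      · simp [Subgroup.smul_def, Equiv.Perm.smul_def, Equiv.Perm.mul_apply,
          Equiv.coe_addLeft]
        ring
      · simp [Subgroup.smul_def, Equiv.Perm.smul_def, Equiv.Perm.mul_apply,
          Equiv.coe_addLeft]
        ring


lemma zz_two_ne_zero (hn : 3 ≤ n) : (2 : ZMod n) ≠ 0 := by
  haveI : NeZero n := ⟨by omega⟩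
  intro h
  have : ((2:ℕ) : ZMod n) = 0 := by push_cast; exact h
  rw [ZMod.natCast_eq_zero_iff] at this
  have := Nat.le_of_dvd (by norm_num) this
  omega

lemma pivot_all (hn : 3 ≤ n) (v : ZMod n) : IsPivot (cycGraph n) (dihedralHalf n) v := by
  haveI : NeZero n := ⟨by omega⟩
  intro w hadj
  rw [cycGraph, SimpleGraph.fromRel_adj] at hadj
  obtain ⟨hne, h⟩ := hadj
  have h2 : (2 : ZMod n) ≠ 0 := zz_two_ne_zero hn
  have hwne : w ≠ 2*v - w := by
    rcases h with rfl | rfl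
    · intro hcontra; exact h2 (by linear_combination hcontra)
    · intro hcontra; exact h2 (by linear_combination -hcontra)
  rw [stab_orbit, Set.ncard_pair hwne]
  exact even_two

end

/-- For `n ≥ 3` even, the vertices of the cycle graph on `n` vertices form exactly two orbits
under the index-`2` dihedral subgroup `G'` of order `n`; and if `n ≡ 2 mod 4`, then every
vertex is a `G'`-pivot vertex, so the number of `G'`-orbits of `G'`-pivot vertices is `2`. -/
theorem stmt_19 (n : ℕ) (hn : 3 ≤ n) (heven : Even n) :
    ({s : Set (ZMod n) | ∃ v : ZMod n, s = MulAction.orbit (dihedralHalf n) v}.ncard = 2)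
    ∧ (n % 4 = 2 →
        (∀ v : ZMod n, IsPivot (cycGraph n) (dihedralHalf n) v)
        ∧ {s : Set (ZMod n) | ∃ v : ZMod n,
            IsPivot (cycGraph n) (dihedralHalf n) v
              ∧ s = MulAction.orbit (dihedralHalf n) v}.ncard = 2) := by
  haveI : NeZero n := ⟨by omega⟩
  have horbset : {s : Set (ZMod n) | ∃ v : ZMod n, s = MulAction.orbit (dihedralHalf n) v}
      = {MulAction.orbit (dihedralHalf n) 0, MulAction.orbit (dihedralHalf n) 1} := by
    ext s
    constructor
    · rintro ⟨v, rfl⟩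
      have hv : ((v.val : ℕ) : ZMod n) = v := by rw [ZMod.natCast_val, ZMod.cast_id]
      rcases Nat.even_or_odd v.val with ⟨m, hm⟩ | ⟨m, hm⟩
      · left
        rw [MulAction.orbit_eq_iff, orbit_eq]
        exact ⟨(m : ZMod n), by rw [← hv, hm]; push_cast; ring⟩
      · right
        rw [Set.mem_singleton_iff, MulAction.orbit_eq_iff, orbit_eq]
        exact ⟨(m : ZMod n), by rw [← hv, hm]; push_cast; ring⟩
    · rintro (rfl | rfl)
      · exact ⟨0, rfl⟩
      · exact ⟨1, rfl⟩
  have hne01 : MulAction.orbit (dihedralHalf n) (0 : ZMod n)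
      ≠ MulAction.orbit (dihedralHalf n) (1 : ZMod n) := by
    intro h
    have h1 : (1 : ZMod n) ∈ MulAction.orbit (dihedralHalf n) (0 : ZMod n) :=
      h ▸ MulAction.mem_orbit_self 1
    rw [orbit_eq] at h1
    obtain ⟨k, hk⟩ := h1
    have hdvd : (2:ℕ) ∣ n := heven.two_dvd
    have h := congrArg (ZMod.castHom hdvd (ZMod 2)) hk
    simp only [map_add, map_mul, map_one, map_zero, map_ofNat] at h
    have h2 : ((2 : ZMod 2)) = 0 := rfl
    rw [h2, zero_mul, zero_add] at h
    exact one_ne_zero h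
  have part1 : {s : Set (ZMod n) | ∃ v : ZMod n, s = MulAction.orbit (dihedralHalf n) v}.ncard = 2 := by
    rw [horbset]; exact Set.ncard_pair hne01
  refine ⟨part1, fun _ => ⟨pivot_all hn, ?_⟩⟩
  have hsets : {s : Set (ZMod n) | ∃ v : ZMod n,
      IsPivot (cycGraph n) (dihedralHalf n) v ∧ s = MulAction.orbit (dihedralHalf n) v}
      = {s : Set (ZMod n) | ∃ v : ZMod n, s = MulAction.orbit (dihedralHalf n) v} := by
    ext s
    constructor
    · rintro ⟨v, _, rfl⟩; exact ⟨v, rfl⟩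
    · rintro ⟨v, rfl⟩; exact ⟨v, pivot_all hn v, rfl⟩
  rw [hsets]; exact part1
end
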